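/- arXiv:1312.1039 — 5 statements merged into one kernel-verified Lean document; each statement's English description precedes it below -/
import Mathlib

section
/- For Hermitian positive definite matrices A and B and t in [0,1], the weighted geometric mean A #_t B := A^{1/2}(A^{-1/2} B A^{-1/2})^t A^{1/2} satisfies A #_t B ⪯ (1-t)A + tB in the Löwner order. -/
set_option linter.unusedSectionVars false

namespace CGO

open Matrix
open scoped ComplexOrder

variable {n : Type*} [Fintype n] [DecidableEq n]

/-- The Löwner partial order `A ⪯ B` on matrices: `B - A` is positive semidefinite. -/
def LoewnerLE (A B : Matrix n n ℂ) : Prop := (B - A).PosSemidef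

lemma cfc_isHermitian {A : Matrix n n ℂ} (hA : A.IsHermitian) (f : ℝ → ℝ) :
    (hA.cfc f).IsHermitian := by
  rw [Matrix.IsHermitian.cfc, Unitary.conjStarAlgAut_apply, Matrix.star_eq_conjTranspose]
  exact Matrix.isHermitian_mul_mul_conjTranspose _
    (Matrix.isHermitian_diagonal_of_self_adjoint _ (by
      show star _ = _
      funext i; simp [Function.comp]))

/-- Real powers of a Hermitian matrix, defined through the spectral theorem
(for positive definite `A`, this is the usual power `A^t`). -/
noncomputable def mpow {A : Matrix n n ℂ} (hA : A.IsHermitian) (t : ℝ) : Matrix n n ℂ :=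
  hA.cfc (fun x => x ^ t)

lemma mpow_isHermitian {A : Matrix n n ℂ} (hA : A.IsHermitian) (t : ℝ) :
    (mpow hA t).IsHermitian := cfc_isHermitian hA _

lemma mul_mul_isHermitian {A B : Matrix n n ℂ} (hA : A.IsHermitian) (hB : B.IsHermitian) :
    (A * B * A).IsHermitian := by
  have h := Matrix.isHermitian_mul_mul_conjTranspose A hB
  rwa [hA.eq] at h

/-- The weighted matrix geometric mean `A #ₜ B := A^{1/2} (A^{-1/2} B A^{-1/2})^t A^{1/2}`.
The midpoint `t = 1/2` is the matrix geometric mean `A # B`. -/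
noncomputable def wgmean {A B : Matrix n n ℂ} (hA : A.PosDef) (hB : B.PosDef) (t : ℝ) :
    Matrix n n ℂ :=
  mpow hA.1 (1/2) *
    mpow (mul_mul_isHermitian (mpow_isHermitian hA.1 (-(1/2))) hB.1) t *
    mpow hA.1 (1/2)

lemma wgmean_isHermitian {A B : Matrix n n ℂ} (hA : A.PosDef) (hB : B.PosDef) (t : ℝ) :
    (wgmean hA hB t).IsHermitian := by
  have h := mul_mul_isHermitian (mpow_isHermitian hA.1 (1/2))
    (mpow_isHermitian (mul_mul_isHermitian (mpow_isHermitian hA.1 (-(1/2))) hB.1) t)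
  simpa [wgmean, mul_assoc] using h


variable {A : Matrix n n ℂ} (hA : A.IsHermitian)

lemma cfc_eq' (f : ℝ → ℝ) :
    hA.cfc f = (hA.eigenvectorUnitary : Matrix n n ℂ) *
      diagonal (Complex.ofReal ∘ f ∘ hA.eigenvalues) *
      (hA.eigenvectorUnitary : Matrix n n ℂ)ᴴ := rfl

lemma my_cfc_mul (f g : ℝ → ℝ) : hA.cfc f * hA.cfc g = hA.cfc (fun x => f x * g x) := by
  rw [cfc_eq', cfc_eq', cfc_eq']
  have h1 : (hA.eigenvectorUnitary : Matrix n n ℂ)ᴴ * (hA.eigenvectorUnitary : Matrix n n ℂ) = 1 :=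
    Matrix.mem_unitaryGroup_iff'.mp hA.eigenvectorUnitary.2
  have h2 : (fun i => (Complex.ofReal ∘ f ∘ hA.eigenvalues) i *
      (Complex.ofReal ∘ g ∘ hA.eigenvalues) i) =
      Complex.ofReal ∘ (fun x => f x * g x) ∘ hA.eigenvalues := by
    funext i; simp [Function.comp]
  calc _ = (hA.eigenvectorUnitary : Matrix n n ℂ) * diagonal (Complex.ofReal ∘ f ∘ hA.eigenvalues) *
      (((hA.eigenvectorUnitary : Matrix n n ℂ)ᴴ * (hA.eigenvectorUnitary : Matrix n n ℂ)) *
      (diagonal (Complex.ofReal ∘ g ∘ hA.eigenvalues) *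
      (hA.eigenvectorUnitary : Matrix n n ℂ)ᴴ)) := by simp only [mul_assoc]
    _ = _ := by
      rw [h1, one_mul, ← mul_assoc, mul_assoc _ (diagonal _) (diagonal _),
        diagonal_mul_diagonal]
      rw [show (fun i => (Complex.ofReal ∘ f ∘ hA.eigenvalues) i *
        (Complex.ofReal ∘ g ∘ hA.eigenvalues) i) =
        Complex.ofReal ∘ (fun x => f x * g x) ∘ hA.eigenvalues from h2]

lemma my_cfc_congr {f g : ℝ → ℝ} (h : ∀ i, f (hA.eigenvalues i) = g (hA.eigenvalues i)) :
    hA.cfc f = hA.cfc g := by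
  rw [cfc_eq', cfc_eq']
  have : Complex.ofReal ∘ f ∘ hA.eigenvalues = Complex.ofReal ∘ g ∘ hA.eigenvalues := by
    funext i; simp [Function.comp, h i]
  rw [this]

lemma my_cfc_id : hA.cfc (fun x => x) = A := by
  rw [cfc_eq']
  exact (hA.spectral_theorem).symm

lemma my_cfc_one : hA.cfc (fun _ => 1) = 1 := by
  rw [cfc_eq']
  have h2 : Complex.ofReal ∘ (fun _ : ℝ => (1:ℝ)) ∘ hA.eigenvalues = fun _ => (1:ℂ) := by
    funext i; simp [Function.comp]
  have : diagonal (Complex.ofReal ∘ (fun _ : ℝ => (1:ℝ)) ∘ hA.eigenvalues) = (1 : Matrix n n ℂ) := by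
    rw [h2]; exact diagonal_one
  rw [this, mul_one]
  exact Matrix.mem_unitaryGroup_iff.mp hA.eigenvectorUnitary.2

lemma my_cfc_add (f g : ℝ → ℝ) : hA.cfc (fun x => f x + g x) = hA.cfc f + hA.cfc g := by
  rw [cfc_eq', cfc_eq', cfc_eq']
  have h2 : Complex.ofReal ∘ (fun x => f x + g x) ∘ hA.eigenvalues =
      (Complex.ofReal ∘ f ∘ hA.eigenvalues) + (Complex.ofReal ∘ g ∘ hA.eigenvalues) := by
    funext i; simp [Function.comp]
  have : diagonal (Complex.ofReal ∘ (fun x => f x + g x) ∘ hA.eigenvalues) =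
      diagonal (Complex.ofReal ∘ f ∘ hA.eigenvalues) +
      diagonal (Complex.ofReal ∘ g ∘ hA.eigenvalues) := by
    rw [h2, diagonal_add]; rfl
  rw [this, mul_add, add_mul]

lemma my_cfc_sub (f g : ℝ → ℝ) : hA.cfc (fun x => f x - g x) = hA.cfc f - hA.cfc g := by
  rw [cfc_eq', cfc_eq', cfc_eq']
  have h2 : Complex.ofReal ∘ (fun x => f x - g x) ∘ hA.eigenvalues =
      (Complex.ofReal ∘ f ∘ hA.eigenvalues) - (Complex.ofReal ∘ g ∘ hA.eigenvalues) := by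
    funext i; simp [Function.comp]
  have : diagonal (Complex.ofReal ∘ (fun x => f x - g x) ∘ hA.eigenvalues) =
      diagonal (Complex.ofReal ∘ f ∘ hA.eigenvalues) -
      diagonal (Complex.ofReal ∘ g ∘ hA.eigenvalues) := by
    rw [h2, diagonal_sub]; rfl
  rw [this, mul_sub, sub_mul]

lemma my_cfc_smul (c : ℝ) (f : ℝ → ℝ) : hA.cfc (fun x => c * f x) = c • hA.cfc f := by
  rw [cfc_eq', cfc_eq']
  have : diagonal (Complex.ofReal ∘ (fun x => c * f x) ∘ hA.eigenvalues) =
      c • diagonal (Complex.ofReal ∘ f ∘ hA.eigenvalues) := by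
    have h2 : Complex.ofReal ∘ (fun x => c * f x) ∘ hA.eigenvalues =
        c • (Complex.ofReal ∘ f ∘ hA.eigenvalues) := by
      funext i; simp [Function.comp, Complex.real_smul]
    rw [h2, diagonal_smul]
  rw [this, mul_smul_comm, smul_mul_assoc]

lemma my_cfc_posSemidef {f : ℝ → ℝ} (h : ∀ i, 0 ≤ f (hA.eigenvalues i)) :
    (hA.cfc f).PosSemidef := by
  rw [cfc_eq']
  apply Matrix.PosSemidef.mul_mul_conjTranspose_same
  rw [Matrix.posSemidef_diagonal_iff]
  intro i
  simpa using h i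


/-- For HPD `A`, `B` and `t ∈ [0,1]`, `A #ₜ B ⪯ (1-t)A + tB`. -/
theorem wgmean_loewnerLE_arith {A B : Matrix n n ℂ} (hA : A.PosDef) (hB : B.PosDef)
    {t : ℝ} (ht : t ∈ Set.Icc (0 : ℝ) 1) :
    LoewnerLE (wgmean hA hB t) ((1 - t) • A + t • B) := by
  obtain ⟨ht0, ht1⟩ := ht
  set M := mpow hA.1 (-(1/2)) with hM
  set S := mpow hA.1 (1/2) with hS
  set C := M * B * M with hCdef
  have hC : C.IsHermitian := mul_mul_isHermitian (mpow_isHermitian hA.1 (-(1/2))) hB.1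
  have hMh : M.IsHermitian := mpow_isHermitian hA.1 _
  have hSh : S.IsHermitian := mpow_isHermitian hA.1 _
  have hev : ∀ i, 0 < hA.1.eigenvalues i := fun i => hA.eigenvalues_pos i
  -- S * S = A
  have SS : S * S = A := by
    rw [hS]
    show hA.1.cfc _ * hA.1.cfc _ = A
    rw [my_cfc_mul]
    rw [my_cfc_congr hA.1 (g := fun x => x) (fun i => by
      rw [← Real.rpow_add (hev i)]; norm_num)]
    exact my_cfc_id hA.1
  -- S * M = 1 and M * S = 1
  have SM : S * M = 1 := by
    rw [hS, hM]
    show hA.1.cfc _ * hA.1.cfc _ = 1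
    rw [my_cfc_mul]
    rw [my_cfc_congr hA.1 (g := fun _ => 1) (fun i => by
      rw [← Real.rpow_add (hev i)]; norm_num)]
    exact my_cfc_one hA.1
  have MS : M * S = 1 := by
    rw [hS, hM]
    show hA.1.cfc _ * hA.1.cfc _ = 1
    rw [my_cfc_mul]
    rw [my_cfc_congr hA.1 (g := fun _ => 1) (fun i => by
      rw [← Real.rpow_add (hev i)]; norm_num)]
    exact my_cfc_one hA.1
  -- S * C * S = B
  have SCS : S * C * S = B := by
    rw [hCdef]
    calc S * (M * B * M) * S = (S * M) * B * (M * S) := by simp only [mul_assoc]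
      _ = B := by rw [SM, MS, one_mul, mul_one]
  -- C is positive semidefinite
  have hCpsd : C.PosSemidef := by
    have h := hB.posSemidef.mul_mul_conjTranspose_same M
    rwa [hMh.eq] at h
  -- the key spectral inequality
  have key : (hC.cfc (fun x => ((1-t) * 1 + t * x) - x ^ t)).PosSemidef := by
    apply my_cfc_posSemidef
    intro i
    have hx : 0 ≤ hC.eigenvalues i := hCpsd.eigenvalues_nonneg i
    have := Real.geom_mean_le_arith_mean2_weighted (by linarith : (0:ℝ) ≤ 1 - t) ht0
      zero_le_one hx (by ring)
    rw [Real.one_rpow, one_mul] at this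
    linarith
  have decomp : hC.cfc (fun x => ((1-t) * 1 + t * x) - x ^ t)
      = ((1-t) • (1 : Matrix n n ℂ) + t • C) - mpow hC t := by
    rw [my_cfc_sub hC (fun x => (1-t) * 1 + t * x) (fun x => x ^ t),
      my_cfc_add hC (fun x => (1-t) * 1) (fun x => t * x),
      my_cfc_smul hC (1-t) (fun _ => 1), my_cfc_smul hC t (fun x => x),
      my_cfc_one, my_cfc_id]
    rfl
  rw [decomp] at key
  have key2 := key.mul_mul_conjTranspose_same S
  rw [hSh.eq] at key2
  have expand : S * (((1-t) • (1 : Matrix n n ℂ) + t • C) - mpow hC t) * S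
      = ((1-t) • A + t • B) - wgmean hA hB t := by
    have e1 : S * ((1-t) • (1 : Matrix n n ℂ)) * S = (1-t) • A := by
      rw [mul_smul_comm, smul_mul_assoc, mul_one, SS]
    have e2 : S * (t • C) * S = t • B := by
      rw [mul_smul_comm, smul_mul_assoc, SCS]
    have e3 : S * mpow hC t * S = wgmean hA hB t := rfl
    calc S * (((1-t) • (1 : Matrix n n ℂ) + t • C) - mpow hC t) * S
        = S * ((1-t) • (1 : Matrix n n ℂ)) * S + S * (t • C) * S - S * mpow hC t * S := by
          rw [mul_sub, sub_mul, mul_add, add_mul]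
      _ = ((1-t) • A + t • B) - wgmean hA hB t := by rw [e1, e2, e3]
  rw [expand] at key2
  exact key2


end CGO
end

section
/- If h : ℝ₊ → ℝ is monotonically increasing and convex, then for Hermitian positive definite matrices A, B and each 1 ≤ k ≤ n, the sum of h applied to the k largest eigenvalues satisfies ∑_{j=1}^k h(λ_j^↓(A # B)) ≤ (1/2)∑_{j=1}^k h(λ_j^↓(A)) + (1/2)∑_{j=1}^k h(λ_j^↓(B)), i.e., the function X ↦ ∑_{j=1}^k h(λ_j^↓(X)) is geodesically midpoint convex on the positive definite manifold. -/
set_option linter.unusedSectionVars false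

namespace CGO

open Matrix
open scoped ComplexOrder

variable {n : Type*} [Fintype n] [DecidableEq n]

/-- The decreasingly sorted eigenvalues `λ₁^↓ ≥ λ₂^↓ ≥ …` of a Hermitian matrix. -/
noncomputable def eigDesc {d : ℕ} {A : Matrix (Fin d) (Fin d) ℂ} (hA : A.IsHermitian) :
    Fin d → ℝ :=
  fun i => hA.eigenvalues (Tuple.sort (fun j => -hA.eigenvalues j) i)


section Analysis

open Finset

/-- Abel-summation style bound. -/
lemma abel_le (k : ℕ) (s d : ℕ → ℝ) (hs : ∀ i j, i ≤ j → j ≤ k → s j ≤ s i)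
    (hd : ∀ m ≤ k, ∑ j ∈ range m, d j ≤ 0) :
    ∑ j ∈ range k, s j * d j ≤ s k * ∑ j ∈ range k, d j := by
  induction k with
  | zero => simp
  | succ k ih =>
    have h1 : ∑ j ∈ range k, s j * d j ≤ s k * ∑ j ∈ range k, d j :=
      ih (fun i j hij hj => hs i j hij (hj.trans k.le_succ))
        (fun m hm => hd m (hm.trans k.le_succ))
    rw [sum_range_succ, sum_range_succ]
    have h2 : s k * ∑ j ∈ range k, d j + s k * d k = s k * (∑ j ∈ range k, d j + d k) := by ring
    have h3 : s k * (∑ j ∈ range k, d j + d k) ≤ s (k+1) * (∑ j ∈ range k, d j + d k) := by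
      have hD : ∑ j ∈ range k, d j + d k ≤ 0 := by
        have := hd (k+1) le_rfl; rwa [sum_range_succ] at this
      exact mul_le_mul_of_nonpos_right (hs k (k+1) k.le_succ le_rfl) hD
    linarith

noncomputable def subgrad (h : ℝ → ℝ) (t : ℝ) : ℝ :=
  sSup ((fun z => (h t - h z) / (t - z)) '' Set.Ico 0 t)

section subgrad
variable {h : ℝ → ℝ}

lemma subgrad_bddAbove (hconv : ConvexOn ℝ (Set.Ici 0) h) {t : ℝ} (ht : 0 < t) :
    BddAbove ((fun z => (h t - h z) / (t - z)) '' Set.Ico 0 t) := by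
  refine ⟨(h (t+1) - h t) / (t + 1 - t), ?_⟩
  rintro x ⟨z, ⟨hz0, hzt⟩, rfl⟩
  exact hconv.slope_mono_adjacent hz0 (by simp; positivity) hzt (by linarith)

lemma subgrad_nonempty {t : ℝ} (ht : 0 < t) :
    ((fun z => (h t - h z) / (t - z)) '' Set.Ico 0 t).Nonempty :=
  ⟨_, ⟨0, ⟨le_rfl, ht⟩, rfl⟩⟩

lemma subgrad_nonneg (hmono : MonotoneOn h (Set.Ici 0)) (hconv : ConvexOn ℝ (Set.Ici 0) h)
    {t : ℝ} (ht : 0 < t) : 0 ≤ subgrad h t := by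
  refine le_csSup (subgrad_bddAbove hconv ht) ⟨0, ⟨le_rfl, ht⟩, rfl⟩ |>.trans' ?_
  have := hmono (Set.mem_Ici.2 le_rfl) (Set.mem_Ici.2 ht.le) ht.le
  apply div_nonneg (by linarith) (by linarith)

lemma subgrad_key (hconv : ConvexOn ℝ (Set.Ici 0) h) {t z : ℝ} (ht : 0 < t) (hz : 0 ≤ z) :
    h t + subgrad h t * (z - t) ≤ h z := by
  rcases lt_trichotomy z t with hlt | rfl | hgt
  · have h1 : (h t - h z) / (t - z) ≤ subgrad h t :=
      le_csSup (subgrad_bddAbove hconv ht) ⟨z, ⟨hz, hlt⟩, rfl⟩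
    have h2 : subgrad h t * (z - t) ≤ (h t - h z) / (t - z) * (z - t) :=
      mul_le_mul_of_nonpos_right h1 (by linarith)
    have h3 : (h t - h z) / (t - z) * (z - t) = -(h t - h z) := by
      rw [div_mul_eq_mul_div, div_eq_iff (by linarith : t - z ≠ 0)]; ring
    linarith
  · simp
  · have h1 : subgrad h t ≤ (h z - h t) / (z - t) := by
      refine csSup_le (subgrad_nonempty ht) ?_
      rintro x ⟨w, ⟨hw0, hwt⟩, rfl⟩
      exact hconv.slope_mono_adjacent hw0 (le_trans ht.le hgt.le) hwt hgt
    have h2 : subgrad h t * (z - t) ≤ (h z - h t) / (z - t) * (z - t) :=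
      mul_le_mul_of_nonneg_right h1 (by linarith)
    have h3 : (h z - h t) / (z - t) * (z - t) = h z - h t :=
      div_mul_cancel₀ _ (by linarith : z - t ≠ 0)
    linarith

lemma subgrad_mono (hconv : ConvexOn ℝ (Set.Ici 0) h) {t₁ t₂ : ℝ} (ht₁ : 0 < t₁) (ht : t₁ ≤ t₂) :
    subgrad h t₁ ≤ subgrad h t₂ := by
  rcases eq_or_lt_of_le ht with rfl | hlt
  · exact le_rfl
  · refine csSup_le (subgrad_nonempty ht₁) ?_
    rintro x ⟨z, ⟨hz0, hzt⟩, rfl⟩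
    have h1 : (h t₁ - h z) / (t₁ - z) ≤ (h t₂ - h t₁) / (t₂ - t₁) :=
      hconv.slope_mono_adjacent hz0 (le_trans hz0 (by linarith)) hzt hlt
    exact h1.trans (le_csSup (subgrad_bddAbove hconv (ht₁.trans hlt))
      ⟨t₁, ⟨ht₁.le, hlt⟩, rfl⟩)

end subgrad

/-- Weak-majorization transfer for convex nondecreasing functions. -/
lemma maj_sum_le {h : ℝ → ℝ} (hmono : MonotoneOn h (Set.Ici 0))
    (hconv : ConvexOn ℝ (Set.Ici 0) h) (k : ℕ) (hk1 : 1 ≤ k) (x y : ℕ → ℝ)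
    (hx : ∀ i < k, 0 < x i) (hy : ∀ i < k, 0 ≤ y i)
    (hxa : ∀ i j, i ≤ j → j < k → x j ≤ x i)
    (hmaj : ∀ m ≤ k, ∑ j ∈ range m, x j ≤ ∑ j ∈ range m, y j) :
    ∑ j ∈ range k, h (x j) ≤ ∑ j ∈ range k, h (y j) := by
  set s : ℕ → ℝ := fun j => subgrad h (x (min j (k-1))) with hs
  have hminlt : ∀ j : ℕ, min j (k-1) < k := fun j => by omega
  have key : ∀ j < k, h (x j) - h (y j) ≤ s j * (x j - y j) := by
    intro j hj
    have hmin : min j (k-1) = j := by omega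
    have := subgrad_key hconv (hx j hj) (hy j hj)
    rw [hs]; simp only [hmin]
    linarith
  have habel : ∑ j ∈ range k, s j * (x j - y j) ≤ 0 := by
    have h1 := abel_le k s (fun j => x j - y j)
      (fun i j hij hj => by
        rw [hs]
        exact subgrad_mono hconv (hx _ (hminlt j)) (hxa _ _ (by omega) (hminlt j)))
      (fun m hm => by
        simp only [Finset.sum_sub_distrib]
        linarith [hmaj m hm])
    simp only [Finset.sum_sub_distrib] at h1 ⊢
    have h2 : s k * (∑ j ∈ range k, x j - ∑ j ∈ range k, y j) ≤ 0 := by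
      apply mul_nonpos_of_nonneg_of_nonpos
      · exact subgrad_nonneg hmono hconv (hx _ (hminlt k))
      · linarith [hmaj k le_rfl]
    linarith
  have h2 : ∑ j ∈ range k, (h (x j) - h (y j)) ≤ ∑ j ∈ range k, s j * (x j - y j) :=
    Finset.sum_le_sum (fun j hj => key j (Finset.mem_range.mp hj))
  rw [Finset.sum_sub_distrib] at h2
  linarith


end Analysis

section CfcAlgebra

variable {A : Matrix n n ℂ}

lemma cfc_mul (hA : A.IsHermitian) (f g : ℝ → ℝ) :
    hA.cfc f * hA.cfc g = hA.cfc (fun x => f x * g x) := by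
  have hU : (star (hA.eigenvectorUnitary : Matrix n n ℂ)) *
      (hA.eigenvectorUnitary : Matrix n n ℂ) = 1 :=
    Unitary.coe_star_mul_self hA.eigenvectorUnitary
  have hd : diagonal (RCLike.ofReal ∘ f ∘ hA.eigenvalues) *
      diagonal (RCLike.ofReal ∘ g ∘ hA.eigenvalues) =
      (diagonal (RCLike.ofReal ∘ (fun x => f x * g x) ∘ hA.eigenvalues) : Matrix n n ℂ) := by
    rw [diagonal_mul_diagonal, diagonal_eq_diagonal_iff]
    intro i
    simp [Function.comp]
  rw [Matrix.IsHermitian.cfc, Matrix.IsHermitian.cfc, Matrix.IsHermitian.cfc]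
  calc (hA.eigenvectorUnitary : Matrix n n ℂ) * diagonal (RCLike.ofReal ∘ f ∘ hA.eigenvalues)
        * star (hA.eigenvectorUnitary : Matrix n n ℂ) *
      ((hA.eigenvectorUnitary : Matrix n n ℂ) * diagonal (RCLike.ofReal ∘ g ∘ hA.eigenvalues)
        * star (hA.eigenvectorUnitary : Matrix n n ℂ))
      = ((hA.eigenvectorUnitary : Matrix n n ℂ) * diagonal (RCLike.ofReal ∘ f ∘ hA.eigenvalues))
        * (star (hA.eigenvectorUnitary : Matrix n n ℂ) * (hA.eigenvectorUnitary : Matrix n n ℂ))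
        * (diagonal (RCLike.ofReal ∘ g ∘ hA.eigenvalues)
          * star (hA.eigenvectorUnitary : Matrix n n ℂ)) := by
        simp only [mul_assoc]
    _ = (hA.eigenvectorUnitary : Matrix n n ℂ) * (diagonal (RCLike.ofReal ∘ f ∘ hA.eigenvalues)
        * diagonal (RCLike.ofReal ∘ g ∘ hA.eigenvalues))
        * star (hA.eigenvectorUnitary : Matrix n n ℂ) := by
        rw [hU, mul_one]; simp only [mul_assoc]
    _ = (hA.eigenvectorUnitary : Matrix n n ℂ)
        * diagonal (RCLike.ofReal ∘ (fun x => f x * g x) ∘ hA.eigenvalues)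
        * star (hA.eigenvectorUnitary : Matrix n n ℂ) := by rw [hd]

lemma cfc_add (hA : A.IsHermitian) (f g : ℝ → ℝ) :
    hA.cfc f + hA.cfc g = hA.cfc (fun x => f x + g x) := by
  have hd : diagonal (RCLike.ofReal ∘ f ∘ hA.eigenvalues) +
      diagonal (RCLike.ofReal ∘ g ∘ hA.eigenvalues) =
      (diagonal (RCLike.ofReal ∘ (fun x => f x + g x) ∘ hA.eigenvalues) : Matrix n n ℂ) := by
    rw [diagonal_add, diagonal_eq_diagonal_iff]
    intro i
    simp [Function.comp]
  rw [Matrix.IsHermitian.cfc, Matrix.IsHermitian.cfc, Matrix.IsHermitian.cfc, ← hd,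
    map_add]

lemma cfc_sub (hA : A.IsHermitian) (f g : ℝ → ℝ) :
    hA.cfc f - hA.cfc g = hA.cfc (fun x => f x - g x) := by
  have hd : diagonal (RCLike.ofReal ∘ f ∘ hA.eigenvalues) -
      diagonal (RCLike.ofReal ∘ g ∘ hA.eigenvalues) =
      (diagonal (RCLike.ofReal ∘ (fun x => f x - g x) ∘ hA.eigenvalues) : Matrix n n ℂ) := by
    rw [diagonal_sub, diagonal_eq_diagonal_iff]
    intro i
    simp [Function.comp]
  rw [Matrix.IsHermitian.cfc, Matrix.IsHermitian.cfc, Matrix.IsHermitian.cfc, ← hd,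
    map_sub]

lemma cfc_smul (hA : A.IsHermitian) (c : ℝ) (f : ℝ → ℝ) :
    (c : ℂ) • hA.cfc f = hA.cfc (fun x => c * f x) := by
  have hd : (c : ℂ) • diagonal (RCLike.ofReal ∘ f ∘ hA.eigenvalues) =
      (diagonal (RCLike.ofReal ∘ (fun x => c * f x) ∘ hA.eigenvalues) : Matrix n n ℂ) := by
    rw [← diagonal_smul, diagonal_eq_diagonal_iff]
    intro i
    simp [Function.comp]
  rw [Matrix.IsHermitian.cfc, Matrix.IsHermitian.cfc, ← hd, map_smul]

lemma cfc_one (hA : A.IsHermitian) : hA.cfc (fun _ => 1) = 1 := by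
  have hd : (diagonal (RCLike.ofReal ∘ (fun (_ : ℝ) => (1:ℝ)) ∘ hA.eigenvalues) : Matrix n n ℂ)
      = 1 := by
    rw [← diagonal_one, diagonal_eq_diagonal_iff]
    intro i
    simp [Function.comp]
  rw [Matrix.IsHermitian.cfc, hd, Unitary.conjStarAlgAut_apply, mul_one]
  exact Unitary.coe_mul_star_self hA.eigenvectorUnitary

lemma cfc_id (hA : A.IsHermitian) : hA.cfc (fun x => x) = A := by
  rw [Matrix.IsHermitian.cfc]
  exact (hA.spectral_theorem).symm

lemma cfc_congr' (hA : A.IsHermitian) {f g : ℝ → ℝ}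
    (hfg : ∀ i, f (hA.eigenvalues i) = g (hA.eigenvalues i)) : hA.cfc f = hA.cfc g := by
  rw [Matrix.IsHermitian.cfc, Matrix.IsHermitian.cfc]
  have hd : diagonal (RCLike.ofReal ∘ f ∘ hA.eigenvalues) =
      (diagonal (RCLike.ofReal ∘ g ∘ hA.eigenvalues) : Matrix n n ℂ) := by
    rw [diagonal_eq_diagonal_iff]
    intro i
    simp [Function.comp, hfg i]
  rw [hd]

lemma cfc_posSemidef (hA : A.IsHermitian) {f : ℝ → ℝ}
    (hf : ∀ i, 0 ≤ f (hA.eigenvalues i)) : (hA.cfc f).PosSemidef := by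
  rw [Matrix.IsHermitian.cfc]
  have hD : (diagonal (RCLike.ofReal ∘ f ∘ hA.eigenvalues) : Matrix n n ℂ).PosSemidef := by
    rw [Matrix.posSemidef_diagonal_iff]
    intro i
    simpa [Function.comp] using Complex.zero_le_real.mpr (hf i)
  have := hD.mul_mul_conjTranspose_same (hA.eigenvectorUnitary : Matrix n n ℂ)
  rwa [Unitary.conjStarAlgAut_apply, Matrix.star_eq_conjTranspose]

end CfcAlgebra

section Quad

variable {A : Matrix n n ℂ}

/-- Conjugation identity for quadratic forms. -/
lemma quad_conj (N D : Matrix n n ℂ) (x : n → ℂ) :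
    star x ⬝ᵥ (N * D * star N) *ᵥ x = star (star N *ᵥ x) ⬝ᵥ D *ᵥ (star N *ᵥ x) := by
  rw [star_mulVec, Matrix.star_eq_conjTranspose, conjTranspose_conjTranspose,
    ← mulVec_mulVec, ← mulVec_mulVec, dotProduct_mulVec]

lemma quad_diagonal (c : n → ℂ) (w : n → ℂ) :
    star w ⬝ᵥ (diagonal c) *ᵥ w = ∑ j, c j * (Complex.normSq (w j) : ℂ) := by
  unfold dotProduct
  refine Finset.sum_congr rfl (fun j _ => ?_)
  rw [mulVec_diagonal]
  simp only [Pi.star_apply, RCLike.star_def]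
  rw [Complex.normSq_eq_conj_mul_self]
  ring

/-- Quadratic form of `hA.cfc f` expanded in the eigenbasis. -/
lemma cfc_quad (hA : A.IsHermitian) (f : ℝ → ℝ) (x : n → ℂ) :
    star x ⬝ᵥ (hA.cfc f) *ᵥ x = ∑ j, (f (hA.eigenvalues j) : ℂ) *
      (Complex.normSq ((star (hA.eigenvectorUnitary : Matrix n n ℂ) *ᵥ x) j) : ℂ) := by
  rw [Matrix.IsHermitian.cfc, Unitary.conjStarAlgAut_apply, quad_conj, quad_diagonal]
  simp [Function.comp]

lemma quad_A (hA : A.IsHermitian) (x : n → ℂ) :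
    star x ⬝ᵥ A *ᵥ x = ∑ j, (hA.eigenvalues j : ℂ) *
      (Complex.normSq ((star (hA.eigenvectorUnitary : Matrix n n ℂ) *ᵥ x) j) : ℂ) := by
  conv_lhs => rw [← cfc_id hA]
  exact cfc_quad hA _ x

lemma cfc_posDef (hA : A.IsHermitian) {f : ℝ → ℝ}
    (hf : ∀ i, 0 < f (hA.eigenvalues i)) : (hA.cfc f).PosDef := by
  refine Matrix.PosDef.of_dotProduct_mulVec_pos (cfc_isHermitian hA f) (fun x hx => ?_)
  rw [cfc_quad hA f x]
  set w := star (hA.eigenvectorUnitary : Matrix n n ℂ) *ᵥ x with hw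
  have hwne : w ≠ 0 := by
    intro h0
    apply hx
    have : (hA.eigenvectorUnitary : Matrix n n ℂ) *ᵥ w = x := by
      rw [hw, mulVec_mulVec, (Matrix.mem_unitaryGroup_iff).mp (hA.eigenvectorUnitary).2,
        one_mulVec]
    rw [← this, h0, mulVec_zero]
  obtain ⟨j0, hj0⟩ : ∃ j, w j ≠ 0 := by
    by_contra hall
    push_neg at hall
    exact hwne (funext hall)
  have : (∑ j, (f (hA.eigenvalues j) : ℂ) * (Complex.normSq (w j) : ℂ))
      = ((∑ j, f (hA.eigenvalues j) * Complex.normSq (w j) : ℝ) : ℂ) := by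
    push_cast
    rfl
  rw [this, Complex.zero_lt_real]
  refine Finset.sum_pos' (fun j _ => mul_nonneg (hf j).le (Complex.normSq_nonneg _))
    ⟨j0, Finset.mem_univ j0, mul_pos (hf j0) ?_⟩
  exact Complex.normSq_pos.mpr hj0

/-- Congruence by an invertible Hermitian matrix preserves positive definiteness. -/
lemma posDef_conj {N B' : Matrix n n ℂ} (hN : N.IsHermitian) {N' : Matrix n n ℂ}
    (hinv : N * N' = 1) (hB : B'.PosDef) : (N * B' * N).PosDef := by
  refine Matrix.PosDef.of_dotProduct_mulVec_pos (mul_mul_isHermitian hN hB.1) (fun x hx => ?_)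
  have key : star x ⬝ᵥ (N * B' * N) *ᵥ x = star (N *ᵥ x) ⬝ᵥ B' *ᵥ (N *ᵥ x) := by
    have : N * B' * N = N * B' * star N := by rw [Matrix.star_eq_conjTranspose, hN.eq]
    rw [this, quad_conj, Matrix.star_eq_conjTranspose, hN.eq]
  rw [key]
  refine hB.dotProduct_mulVec_pos (x := N *ᵥ x) (fun h0 => hx ?_)
  have h2 : N' * N = 1 := mul_eq_one_comm.mp hinv
  calc x = (N' * N) *ᵥ x := by rw [h2, one_mulVec]
    _ = N' *ᵥ (N *ᵥ x) := by rw [mulVec_mulVec]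
    _ = 0 := by rw [h0, mulVec_zero]

end Quad

section Loewner

set_option maxHeartbeats 1000000 in
lemma loewner {A B : Matrix n n ℂ} (hA : A.PosDef) (hB : B.PosDef) :
    ((1/2 : ℂ) • A + (1/2 : ℂ) • B - wgmean hA hB (1/2)).PosSemidef := by
  have hhalf : ((1/2 : ℝ) : ℂ) = (1/2 : ℂ) := by norm_num
  have hN : (mpow hA.1 (-(1/2))).IsHermitian := mpow_isHermitian hA.1 _
  have hR : (mpow hA.1 (1/2)).IsHermitian := mpow_isHermitian hA.1 _
  set N := mpow hA.1 (-(1/2)) with hNdef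
  set R := mpow hA.1 (1/2) with hRdef
  have hApos : ∀ i, 0 < hA.1.eigenvalues i := fun i => hA.eigenvalues_pos i
  have hadd0 : (1/2 : ℝ) + -(1/2) = 0 := by norm_num
  have hadd1 : (1/2 : ℝ) + 1/2 = 1 := by norm_num
  have hRN : R * N = 1 := by
    have h1 : R * N = hA.1.cfc (fun x => x ^ (1/2 : ℝ) * x ^ (-(1/2) : ℝ)) :=
      cfc_mul hA.1 _ _
    rw [h1, cfc_congr' hA.1 (g := fun _ => 1) (fun i => by
      rw [← Real.rpow_add (hApos i), hadd0, Real.rpow_zero]), cfc_one]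
  have hNR : N * R = 1 := mul_eq_one_comm.mp hRN
  have hRR : R * R = A := by
    have h1 : R * R = hA.1.cfc (fun x => x ^ (1/2 : ℝ) * x ^ (1/2 : ℝ)) :=
      cfc_mul hA.1 _ _
    rw [h1, cfc_congr' hA.1 (g := fun x => x) (fun i => by
      rw [← Real.rpow_add (hApos i), hadd1, Real.rpow_one]), cfc_id]
  have hC : (N * B * N).IsHermitian := mul_mul_isHermitian hN hB.1
  have hCpos : (N * B * N).PosDef := posDef_conj hN hNR hB
  have hCeig : ∀ i, 0 < hC.eigenvalues i := fun i => hCpos.eigenvalues_pos i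
  have hg : ∀ i, 0 ≤ (fun t : ℝ => ((1/2 : ℝ) * 1 + (1/2 : ℝ) * t) - t ^ ((1:ℝ)/2))
      (hC.eigenvalues i) := by
    intro i
    have htpos : 0 < hC.eigenvalues i := hCeig i
    have h2 : hC.eigenvalues i ^ ((1:ℝ)/2) * hC.eigenvalues i ^ ((1:ℝ)/2)
        = hC.eigenvalues i := by
      rw [← Real.rpow_add htpos]; norm_num
    simp only
    nlinarith [sq_nonneg (1 - hC.eigenvalues i ^ ((1:ℝ)/2))]
  have e1 : (1/2:ℂ) • (1 : Matrix n n ℂ) = hC.cfc (fun x => (1/2:ℝ) * 1) := by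
    calc (1/2:ℂ) • (1 : Matrix n n ℂ) = ((1/2:ℝ):ℂ) • hC.cfc (fun _ => 1) := by
          rw [cfc_one hC, hhalf]
      _ = hC.cfc (fun x => (1/2:ℝ) * 1) := cfc_smul hC _ _
  have e2 : (1/2:ℂ) • (N * B * N) = hC.cfc (fun x => (1/2:ℝ) * x) := by
    calc (1/2:ℂ) • (N * B * N) = ((1/2:ℝ):ℂ) • hC.cfc (fun x => x) := by
          rw [cfc_id hC, hhalf]
      _ = hC.cfc (fun x => (1/2:ℝ) * x) := cfc_smul hC _ _
  have hmid : (1/2:ℂ) • (1 : Matrix n n ℂ) + (1/2:ℂ) • (N * B * N) - mpow hC (1/2) =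
      hC.cfc (fun t : ℝ => ((1/2 : ℝ) * 1 + (1/2 : ℝ) * t) - t ^ ((1:ℝ)/2)) := by
    have hS : mpow hC (1/2) = hC.cfc (fun x => x ^ ((1:ℝ)/2)) := by
      rw [mpow]
    rw [e1, e2, cfc_add]
    try rw [hS]
    try rw [cfc_sub]
  have k1 : R * ((1/2:ℂ) • (1 : Matrix n n ℂ)) * R = (1/2:ℂ) • A := by
    rw [mul_smul_comm, smul_mul_assoc, mul_one, hRR]
  have hRCR : R * (N * B * N) * R = B := by
    calc R * (N * B * N) * R = R * N * (B * (N * R)) := by simp only [mul_assoc]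
      _ = B := by rw [hRN, hNR, one_mul, mul_one]
  have k2 : R * ((1/2:ℂ) • (N * B * N)) * R = (1/2:ℂ) • B := by
    rw [mul_smul_comm, smul_mul_assoc, hRCR]
  have k3 : R * mpow hC (1/2) * R = wgmean hA hB (1/2) := rfl
  have key : R * ((1/2:ℂ) • (1 : Matrix n n ℂ) + (1/2:ℂ) • (N * B * N) - mpow hC (1/2)) * R =
      (1/2:ℂ) • A + (1/2:ℂ) • B - wgmean hA hB (1/2) := by
    rw [mul_sub, sub_mul, mul_add, add_mul, k1, k2, k3]
  have hpsd := (cfc_posSemidef (f := fun t : ℝ => ((1/2 : ℝ) * 1 + (1/2 : ℝ) * t) - t ^ ((1:ℝ)/2)) hC hg).mul_mul_conjTranspose_same R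
  rw [hR.eq, ← hmid, key] at hpsd
  exact hpsd

end Loewner

section KyFan

variable {d : ℕ} {X : Matrix (Fin d) (Fin d) ℂ}

lemma eigDesc_antitone (hX : X.IsHermitian) : Antitone (eigDesc hX) := by
  intro i j hij
  have := Tuple.monotone_sort (fun j => -hX.eigenvalues j) hij
  simp only [Function.comp_apply] at this
  dsimp only [eigDesc]
  linarith

lemma weight_sum_le (w : Fin d → ℝ) (hw : Antitone w) (c : Fin d → ℝ)
    (hc0 : ∀ j, 0 ≤ c j) (hc1 : ∀ j, c j ≤ 1) (m : ℕ) (hm1 : 1 ≤ m) (hmd : m ≤ d)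
    (hsum : ∑ j, c j = m) :
    ∑ j, c j * w j ≤ ∑ j : Fin m, w (Fin.castLE hmd j) := by
  have hm1d : m - 1 < d := by omega
  set t := w ⟨m-1, hm1d⟩ with htdef
  set e : Fin d → ℝ := fun j => if (j : ℕ) < m then 1 else 0 with hedef
  have hfilter : Finset.univ.filter (fun j : Fin d => (j : ℕ) < m) =
      Finset.univ.map (Fin.castLEEmb hmd) := by
    ext j
    simp only [Finset.mem_filter, Finset.mem_univ, true_and, Finset.mem_map]
    constructor
    · intro hj
      exact ⟨⟨(j : ℕ), hj⟩, by
        apply Fin.ext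
        simp⟩
    · rintro ⟨i, -, rfl⟩
      simp
  have he_w : ∑ j, e j * w j = ∑ j : Fin m, w (Fin.castLE hmd j) := by
    have h1 : ∑ j, e j * w j = ∑ j ∈ Finset.univ.filter (fun j : Fin d => (j : ℕ) < m), w j := by
      rw [Finset.sum_filter]
      refine Finset.sum_congr rfl (fun j _ => ?_)
      rw [hedef]
      by_cases hj : (j : ℕ) < m <;> simp [hj]
    rw [h1, hfilter, Finset.sum_map]
    rfl
  have he_sum : ∑ j, e j = (m : ℝ) := by
    have h1 : ∑ j, e j = ∑ j ∈ Finset.univ.filter (fun j : Fin d => (j : ℕ) < m), (1:ℝ) := by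
      rw [Finset.sum_filter]
    rw [h1, hfilter, Finset.sum_map]
    simp
  have key : ∀ j : Fin d, (c j - e j) * (w j - t) ≤ 0 := by
    intro j
    by_cases hj : (j : ℕ) < m
    · have he : e j = 1 := by rw [hedef]; simp [hj]
      have hwt : t ≤ w j := hw (show j ≤ ⟨m-1, hm1d⟩ from by
        rw [Fin.le_def]; simp; omega)
      nlinarith [hc1 j]
    · have he : e j = 0 := by rw [hedef]; simp [hj]
      have hwt : w j ≤ t := hw (show (⟨m-1, hm1d⟩ : Fin d) ≤ j from by
        rw [Fin.le_def]; simp; omega)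
      nlinarith [hc0 j]
  have expand : ∑ j, (c j - e j) * (w j - t) =
      ∑ j, c j * w j - ∑ j, e j * w j - (∑ j, c j) * t + (∑ j, e j) * t := by
    rw [Finset.sum_mul, Finset.sum_mul]
    rw [show ∀ (a b c₁ d₁ : ℝ), a - b - c₁ + d₁ = a - b - (c₁ - d₁) from fun a b c₁ d₁ => by ring]
    rw [← Finset.sum_sub_distrib, ← Finset.sum_sub_distrib, ← Finset.sum_sub_distrib]
    exact Finset.sum_congr rfl (fun j _ => by ring)
  have hle : ∑ j, (c j - e j) * (w j - t) ≤ 0 :=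
    Finset.sum_nonpos (fun j _ => key j)
  rw [expand, hsum, he_sum] at hle
  linarith [he_w]

lemma kyfan_upper (hX : X.IsHermitian) (m : ℕ) (hm1 : 1 ≤ m) (hmd : m ≤ d)
    (u : Fin m → (Fin d → ℂ))
    (hu : ∀ i i', star (u i) ⬝ᵥ u i' = if i = i' then 1 else 0) :
    ∑ i, (star (u i) ⬝ᵥ X *ᵥ u i).re ≤ ∑ j : Fin m, eigDesc hX (Fin.castLE hmd j) := by
  set U := (hX.eigenvectorUnitary : Matrix (Fin d) (Fin d) ℂ) with hUdef
  set w : Fin m → (Fin d → ℂ) := fun i => star U *ᵥ u i with hwdef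
  set c : Fin d → ℝ := fun j => ∑ i, Complex.normSq (w i j) with hcdef
  have hwdot : ∀ i i', star (w i) ⬝ᵥ w i' = if i = i' then 1 else 0 := by
    intro i i'
    rw [hwdef]
    dsimp only
    have hUU : U * Uᴴ = 1 := by
      rw [hUdef, ← Matrix.star_eq_conjTranspose]
      exact (Matrix.mem_unitaryGroup_iff).mp (hX.eigenvectorUnitary).2
    rw [star_mulVec, Matrix.star_eq_conjTranspose, conjTranspose_conjTranspose,
      dotProduct_mulVec, vecMul_vecMul, hUU, vecMul_one]
    exact hu i i'
  have hdotself : ∀ (z : Fin d → ℂ), star z ⬝ᵥ z = ((∑ j, Complex.normSq (z j) : ℝ) : ℂ) := by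
    intro z
    unfold dotProduct
    push_cast
    refine Finset.sum_congr rfl (fun j _ => ?_)
    simp only [Pi.star_apply, RCLike.star_def]
    rw [Complex.normSq_eq_conj_mul_self]
  have hquad : ∀ i : Fin m, (star (u i) ⬝ᵥ X *ᵥ u i).re =
      ∑ j, hX.eigenvalues j * Complex.normSq (w i j) := by
    intro i
    rw [quad_A hX (u i)]
    have : (∑ j, (hX.eigenvalues j : ℂ) * (Complex.normSq (w i j) : ℂ)) =
        ((∑ j, hX.eigenvalues j * Complex.normSq (w i j) : ℝ) : ℂ) := by
      push_cast
      rfl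
    rw [this, Complex.ofReal_re]
  have hrow : ∀ i, ∑ j, Complex.normSq (w i j) = 1 := by
    intro i
    have h2 := hwdot i i
    rw [if_pos rfl, hdotself (w i)] at h2
    exact_mod_cast h2
  have hc0 : ∀ j, 0 ≤ c j := fun j =>
    Finset.sum_nonneg (fun i _ => Complex.normSq_nonneg _)
  have hcsum : ∑ j, c j = (m : ℝ) := by
    rw [hcdef]
    rw [Finset.sum_comm]
    simp [hrow]
  have hc1 : ∀ j, c j ≤ 1 := by
    intro j
    set W : Matrix (Fin m) (Fin d) ℂ := Matrix.of (fun i jj => w i jj) with hWdef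
    have hWW : W * Wᴴ = 1 := by
      ext i i'
      simp only [Matrix.mul_apply, conjTranspose_apply, Matrix.of_apply, Matrix.one_apply, hWdef]
      calc ∑ jj, w i jj * star (w i' jj) = star (w i') ⬝ᵥ w i := by
            unfold dotProduct
            exact Finset.sum_congr rfl (fun jj _ => by
              simp only [Pi.star_apply]; ring)
        _ = if i' = i then 1 else 0 := hwdot i' i
        _ = if i = i' then 1 else 0 := by
            rcases eq_or_ne i i' with rfl | h
            · rfl
            · rw [if_neg (fun hh : i' = i => h hh.symm), if_neg h]
    set P := Wᴴ * W with hPdef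
    have hPP : P * P = P := by
      rw [hPdef]
      calc Wᴴ * W * (Wᴴ * W) = Wᴴ * ((W * Wᴴ) * W) := by
            rw [Matrix.mul_assoc, Matrix.mul_assoc]
        _ = Wᴴ * W := by rw [hWW, Matrix.one_mul]
    have hPherm : Pᴴ = P := by
      rw [hPdef, conjTranspose_mul, conjTranspose_conjTranspose]
    have hPjj : P j j = (c j : ℂ) := by
      rw [hPdef]
      simp only [Matrix.mul_apply, conjTranspose_apply, Matrix.of_apply, hcdef]
      push_cast
      refine Finset.sum_congr rfl (fun i _ => ?_)
      rw [Complex.normSq_eq_conj_mul_self]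
      rfl
    have hdiag : (c j : ℂ) = ∑ l, (Complex.normSq (P j l) : ℂ) := by
      conv_lhs => rw [← hPjj, ← hPP]
      rw [Matrix.mul_apply]
      refine Finset.sum_congr rfl (fun l _ => ?_)
      have hlj : P l j = starRingEnd ℂ (P j l) := by
        conv_lhs => rw [← hPherm]
        rfl
      rw [hlj, Complex.mul_conj]
    have hreal : c j = ∑ l, Complex.normSq (P j l) := by exact_mod_cast hdiag
    have hge : Complex.normSq (P j j) ≤ ∑ l, Complex.normSq (P j l) :=
      Finset.single_le_sum (fun l _ => Complex.normSq_nonneg _) (Finset.mem_univ j)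
    rw [hPjj, Complex.normSq_ofReal] at hge
    nlinarith [hc0 j]
  have step1 : ∑ i, (star (u i) ⬝ᵥ X *ᵥ u i).re = ∑ j, c j * hX.eigenvalues j := by
    rw [Finset.sum_congr rfl (fun i _ => hquad i), Finset.sum_comm]
    refine Finset.sum_congr rfl (fun j _ => ?_)
    rw [hcdef]
    rw [Finset.sum_mul]
    exact Finset.sum_congr rfl (fun i _ => by ring)
  rw [step1]
  have hσ := Equiv.sum_comp (Tuple.sort (fun j => -hX.eigenvalues j))
    (fun j => c j * hX.eigenvalues j)
  rw [← hσ]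
  exact weight_sum_le (eigDesc hX) (eigDesc_antitone hX)
    (fun i => c (Tuple.sort (fun j => -hX.eigenvalues j) i))
    (fun i => hc0 _) (fun i => hc1 _) m hm1 hmd
    (by rw [Equiv.sum_comp (Tuple.sort (fun j => -hX.eigenvalues j)) c]; exact hcsum)

end KyFan

section Eigvec

variable {d : ℕ} {M : Matrix (Fin d) (Fin d) ℂ}

lemma eigDesc_prefix_sum (hM : M.IsHermitian) (m : ℕ) (hmd : m ≤ d) :
    ∃ u : Fin m → (Fin d → ℂ),
      (∀ i i', star (u i) ⬝ᵥ u i' = if i = i' then 1 else 0) ∧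
      (∀ i, (star (u i) ⬝ᵥ M *ᵥ u i).re = eigDesc hM (Fin.castLE hmd i)) := by
  set σ := Tuple.sort (fun j => -hM.eigenvalues j) with hσ
  refine ⟨fun i => (WithLp.equiv 2 (Fin d → ℂ)) (hM.eigenvectorBasis (σ (Fin.castLE hmd i))),
    ?_, ?_⟩
  · intro i i'
    have horth := orthonormal_iff_ite.mp hM.eigenvectorBasis.orthonormal
      (σ (Fin.castLE hmd i)) (σ (Fin.castLE hmd i'))
    rw [EuclideanSpace.inner_eq_star_dotProduct, dotProduct_comm] at horth
    refine horth.trans ?_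
    rcases eq_or_ne i i' with rfl | h
    · rw [if_pos rfl, if_pos rfl]
    · rw [if_neg h, if_neg (fun hh => h ?_)]
      exact Fin.castLE_injective hmd (σ.injective hh)
  · intro i
    have hmv : M *ᵥ (WithLp.equiv 2 (Fin d → ℂ)) (hM.eigenvectorBasis (σ (Fin.castLE hmd i))) =
        hM.eigenvalues (σ (Fin.castLE hmd i)) •
          (WithLp.equiv 2 (Fin d → ℂ)) (hM.eigenvectorBasis (σ (Fin.castLE hmd i))) :=
      hM.mulVec_eigenvectorBasis (σ (Fin.castLE hmd i))
    beta_reduce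
    rw [hmv]
    have hone : star ((WithLp.equiv 2 (Fin d → ℂ)) (hM.eigenvectorBasis (σ (Fin.castLE hmd i))))
        ⬝ᵥ (WithLp.equiv 2 (Fin d → ℂ)) (hM.eigenvectorBasis (σ (Fin.castLE hmd i))) = 1 := by
      have horth := orthonormal_iff_ite.mp hM.eigenvectorBasis.orthonormal
        (σ (Fin.castLE hmd i)) (σ (Fin.castLE hmd i))
      rw [EuclideanSpace.inner_eq_star_dotProduct, dotProduct_comm] at horth
      exact horth.trans (if_pos rfl)
    rw [dotProduct_smul, hone, Complex.real_smul, mul_one, Complex.ofReal_re]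
    rfl

lemma wgmean_posDef {A B : Matrix n n ℂ} (hA : A.PosDef) (hB : B.PosDef) :
    (wgmean hA hB (1/2)).PosDef := by
  have hN : (mpow hA.1 (-(1/2))).IsHermitian := mpow_isHermitian hA.1 _
  have hR : (mpow hA.1 (1/2)).IsHermitian := mpow_isHermitian hA.1 _
  have hApos : ∀ i, 0 < hA.1.eigenvalues i := fun i => hA.eigenvalues_pos i
  have hadd0 : (1/2 : ℝ) + -(1/2) = 0 := by norm_num
  have hRN : mpow hA.1 (1/2) * mpow hA.1 (-(1/2)) = 1 := by
    have h1 : mpow hA.1 (1/2) * mpow hA.1 (-(1/2)) =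
        hA.1.cfc (fun x => x ^ (1/2 : ℝ) * x ^ (-(1/2) : ℝ)) := cfc_mul hA.1 _ _
    rw [h1, cfc_congr' hA.1 (g := fun _ => 1) (fun i => by
      rw [← Real.rpow_add (hApos i), hadd0, Real.rpow_zero]), cfc_one]
  have hNR : mpow hA.1 (-(1/2)) * mpow hA.1 (1/2) = 1 := mul_eq_one_comm.mp hRN
  have hC : (mpow hA.1 (-(1/2)) * B * mpow hA.1 (-(1/2))).IsHermitian :=
    mul_mul_isHermitian hN hB.1
  have hCpos : (mpow hA.1 (-(1/2)) * B * mpow hA.1 (-(1/2))).PosDef := posDef_conj hN hNR hB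
  have hCeig : ∀ i, 0 < hC.eigenvalues i := fun i => hCpos.eigenvalues_pos i
  have hSpos : (mpow hC (1/2)).PosDef := by
    rw [mpow]
    exact cfc_posDef hC (fun i => Real.rpow_pos_of_pos (hCeig i) _)
  exact posDef_conj hR hRN hSpos

lemma quad_le_of_psd {A B M : Matrix n n ℂ}
    (hpsd : ((1/2:ℂ) • A + (1/2:ℂ) • B - M).PosSemidef) (u : n → ℂ) :
    (star u ⬝ᵥ M *ᵥ u).re ≤
      1/2 * (star u ⬝ᵥ A *ᵥ u).re + 1/2 * (star u ⬝ᵥ B *ᵥ u).re := by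
  have h0 := hpsd.dotProduct_mulVec_nonneg u
  rw [sub_mulVec, add_mulVec, smul_mulVec, smul_mulVec, dotProduct_sub,
    dotProduct_add, dotProduct_smul, dotProduct_smul, smul_eq_mul, smul_eq_mul] at h0
  rw [Complex.le_def] at h0
  obtain ⟨h1, -⟩ := h0
  simp only [Complex.zero_re, Complex.sub_re, Complex.add_re, Complex.mul_re] at h1
  norm_num at h1
  linarith

lemma finsum_eq_rangesum {d m : ℕ} (hmd : m ≤ d) (f : Fin d → ℝ) (g : ℕ → ℝ)
    (hg : ∀ i (hi : i < d), g i = f ⟨i, hi⟩) :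
    ∑ j : Fin m, f (Fin.castLE hmd j) = ∑ i ∈ Finset.range m, g i := by
  rw [← Fin.sum_univ_eq_sum_range g m]
  exact Finset.sum_congr rfl (fun j _ => (hg j.1 (lt_of_lt_of_le j.isLt hmd)).symm)

end Eigvec

/-- Tracial g-convexity: for nondecreasing convex `h : ℝ₊ → ℝ`,
`X ↦ ∑_{j=1}^k h(λ_j^↓(X))` is geodesically midpoint convex. -/
theorem sum_h_eigDesc_gmean_le {d : ℕ} {h : ℝ → ℝ}
    (hmono : MonotoneOn h (Set.Ici 0)) (hconv : ConvexOn ℝ (Set.Ici 0) h)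
    {A B : Matrix (Fin d) (Fin d) ℂ} (hA : A.PosDef) (hB : B.PosDef)
    (k : ℕ) (hk1 : 1 ≤ k) (hk : k ≤ d) :
    ∑ j : Fin k, h (eigDesc (wgmean_isHermitian hA hB (1/2)) (Fin.castLE hk j)) ≤
      (1/2) * ∑ j : Fin k, h (eigDesc hA.1 (Fin.castLE hk j)) +
      (1/2) * ∑ j : Fin k, h (eigDesc hB.1 (Fin.castLE hk j)) := by
  have hMpos := wgmean_posDef hA hB
  set xs : ℕ → ℝ := fun i =>
    if hi : i < d then eigDesc (wgmean_isHermitian hA hB (1/2)) ⟨i, hi⟩ else 1 with hxs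
  set ya : ℕ → ℝ := fun i => if hi : i < d then eigDesc hA.1 ⟨i, hi⟩ else 1 with hya
  set yb : ℕ → ℝ := fun i => if hi : i < d then eigDesc hB.1 ⟨i, hi⟩ else 1 with hyb
  set ys : ℕ → ℝ := fun i => 1/2 * ya i + 1/2 * yb i with hys
  have hxpos : ∀ i (hi : i < d), 0 < xs i := by
    intro i hi
    rw [hxs]
    dsimp only
    rw [dif_pos hi]
    exact hMpos.eigenvalues_pos _
  have hyapos : ∀ i (hi : i < d), 0 < ya i := by
    intro i hi
    rw [hya]
    dsimp only
    rw [dif_pos hi]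
    exact hA.eigenvalues_pos _
  have hybpos : ∀ i (hi : i < d), 0 < yb i := by
    intro i hi
    rw [hyb]
    dsimp only
    rw [dif_pos hi]
    exact hB.eigenvalues_pos _
  have hmain : ∑ i ∈ Finset.range k, h (xs i) ≤ ∑ i ∈ Finset.range k, h (ys i) := by
    refine maj_sum_le hmono hconv k hk1 xs ys
      (fun i hi => hxpos i (lt_of_lt_of_le hi hk))
      (fun i hi => by
        have h1 := hyapos i (lt_of_lt_of_le hi hk)
        have h2 := hybpos i (lt_of_lt_of_le hi hk)
        rw [hys]; dsimp only; linarith)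
      (fun i j hij hj => by
        have hid : i < d := by omega
        have hjd : j < d := by omega
        rw [hxs]; dsimp only
        rw [dif_pos hid, dif_pos hjd]
        exact eigDesc_antitone (wgmean_isHermitian hA hB (1/2)) (Fin.mk_le_mk.mpr hij))
      (fun m hm => ?_)
    rcases Nat.eq_zero_or_pos m with rfl | hm1
    · simp
    have hmd : m ≤ d := hm.trans hk
    obtain ⟨u, huorth, huval⟩ := eigDesc_prefix_sum (wgmean_isHermitian hA hB (1/2)) m hmd
    have hL : ∑ i ∈ Finset.range m, xs i =
        ∑ i : Fin m, (star (u i) ⬝ᵥ (wgmean hA hB (1/2)) *ᵥ u i).re := by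
      rw [← finsum_eq_rangesum hmd (fun j => eigDesc (wgmean_isHermitian hA hB (1/2)) j) xs
        (fun i hi => by rw [hxs]; dsimp only; rw [dif_pos hi])]
      exact (Finset.sum_congr rfl (fun i _ => (huval i))).symm
    have hstep : ∀ i : Fin m, (star (u i) ⬝ᵥ (wgmean hA hB (1/2)) *ᵥ u i).re ≤
        1/2 * (star (u i) ⬝ᵥ A *ᵥ u i).re + 1/2 * (star (u i) ⬝ᵥ B *ᵥ u i).re :=
      fun i => quad_le_of_psd (loewner hA hB) (u i)
    have hKA := kyfan_upper hA.1 m hm1 hmd u huorth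
    have hKB := kyfan_upper hB.1 m hm1 hmd u huorth
    have hYA : ∑ j : Fin m, eigDesc hA.1 (Fin.castLE hmd j) = ∑ i ∈ Finset.range m, ya i :=
      finsum_eq_rangesum hmd (fun j => eigDesc hA.1 j) ya (fun i hi => by rw [hya]; dsimp only; rw [dif_pos hi])
    have hYB : ∑ j : Fin m, eigDesc hB.1 (Fin.castLE hmd j) = ∑ i ∈ Finset.range m, yb i :=
      finsum_eq_rangesum hmd (fun j => eigDesc hB.1 j) yb (fun i hi => by rw [hyb]; dsimp only; rw [dif_pos hi])
    have hysum : ∑ i ∈ Finset.range m, ys i =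
        1/2 * ∑ i ∈ Finset.range m, ya i + 1/2 * ∑ i ∈ Finset.range m, yb i := by
      rw [hys]
      dsimp only
      rw [Finset.sum_add_distrib, ← Finset.mul_sum, ← Finset.mul_sum]
    calc ∑ i ∈ Finset.range m, xs i
        = ∑ i : Fin m, (star (u i) ⬝ᵥ (wgmean hA hB (1/2)) *ᵥ u i).re := hL
      _ ≤ ∑ i : Fin m, (1/2 * (star (u i) ⬝ᵥ A *ᵥ u i).re +
            1/2 * (star (u i) ⬝ᵥ B *ᵥ u i).re) :=
          Finset.sum_le_sum (fun i _ => hstep i)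
      _ = 1/2 * ∑ i : Fin m, (star (u i) ⬝ᵥ A *ᵥ u i).re +
            1/2 * ∑ i : Fin m, (star (u i) ⬝ᵥ B *ᵥ u i).re := by
          rw [Finset.sum_add_distrib, ← Finset.mul_sum, ← Finset.mul_sum]
      _ ≤ 1/2 * ∑ j : Fin m, eigDesc hA.1 (Fin.castLE hmd j) +
            1/2 * ∑ j : Fin m, eigDesc hB.1 (Fin.castLE hmd j) := by
          have half : (0:ℝ) ≤ 1/2 := by norm_num
          exact add_le_add (mul_le_mul_of_nonneg_left hKA half)
            (mul_le_mul_of_nonneg_left hKB half)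
      _ = ∑ i ∈ Finset.range m, ys i := by rw [hYA, hYB, hysum]
  have hconvstep : ∑ i ∈ Finset.range k, h (ys i) ≤
      1/2 * ∑ i ∈ Finset.range k, h (ya i) + 1/2 * ∑ i ∈ Finset.range k, h (yb i) := by
    have hpt : ∀ i ∈ Finset.range k, h (ys i) ≤ 1/2 * h (ya i) + 1/2 * h (yb i) := by
      intro i hi
      have hid : i < d := lt_of_lt_of_le (Finset.mem_range.mp hi) hk
      have h1 := hyapos i hid
      have h2 := hybpos i hid
      have := hconv.2 (Set.mem_Ici.mpr h1.le) (Set.mem_Ici.mpr h2.le)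
        (by norm_num : (0:ℝ) ≤ 1/2) (by norm_num : (0:ℝ) ≤ 1/2) (by norm_num)
      rw [smul_eq_mul, smul_eq_mul, smul_eq_mul] at this
      rw [hys]
      dsimp only
      exact this
    calc ∑ i ∈ Finset.range k, h (ys i)
        ≤ ∑ i ∈ Finset.range k, (1/2 * h (ya i) + 1/2 * h (yb i)) :=
          Finset.sum_le_sum hpt
      _ = 1/2 * ∑ i ∈ Finset.range k, h (ya i) + 1/2 * ∑ i ∈ Finset.range k, h (yb i) := by
          rw [Finset.sum_add_distrib, ← Finset.mul_sum, ← Finset.mul_sum]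
  have hfinal1 : ∑ j : Fin k, h (eigDesc (wgmean_isHermitian hA hB (1/2)) (Fin.castLE hk j)) =
      ∑ i ∈ Finset.range k, h (xs i) :=
    finsum_eq_rangesum hk (fun j => h (eigDesc (wgmean_isHermitian hA hB (1/2)) j))
      (fun i => h (xs i))
      (fun i hi => by rw [hxs]; dsimp only; rw [dif_pos hi])
  have hfinalA : ∑ j : Fin k, h (eigDesc hA.1 (Fin.castLE hk j)) =
      ∑ i ∈ Finset.range k, h (ya i) :=
    finsum_eq_rangesum hk (fun j => h (eigDesc hA.1 j)) (fun i => h (ya i))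
      (fun i hi => by rw [hya]; dsimp only; rw [dif_pos hi])
  have hfinalB : ∑ j : Fin k, h (eigDesc hB.1 (Fin.castLE hk j)) =
      ∑ i ∈ Finset.range k, h (yb i) :=
    finsum_eq_rangesum hk (fun j => h (eigDesc hB.1 j)) (fun i => h (yb i))
      (fun i hi => by rw [hyb]; dsimp only; rw [dif_pos hi])
  rw [hfinal1, hfinalA, hfinalB]
  linarith

end CGO
end

section
/- Let Φ be a positive linear map between spaces of Hermitian matrices. Then for Hermitian positive definite A, B, the parallel sum satisfies Φ(A : B) ⪯ Φ(A) : Φ(B), where A : B := (A^{-1} + B^{-1})^{-1}. -/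
set_option linter.unusedSectionVars false
set_option maxHeartbeats 2000000

namespace CGO

open Matrix
open scoped ComplexOrder

variable {n : Type*} [Fintype n] [DecidableEq n]

lemma diagonal_eq_sum_std (c : n → ℂ) :
    Matrix.diagonal c = ∑ j, c j • Matrix.single j j (1 : ℂ) := by
  ext a b
  simp only [Matrix.sum_apply, Matrix.smul_apply, Matrix.single, Matrix.of_apply,
    smul_ite, smul_eq_mul, mul_one, smul_zero]
  by_cases h : a = b
  · subst h
    rw [Matrix.diagonal_apply_eq]
    simp
  · rw [Matrix.diagonal_apply_ne _ h]
    exact (Finset.sum_eq_zero fun j _ => by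
      rw [if_neg (by rintro ⟨h1, h2⟩; exact h (h1.symm.trans h2)), mul_zero]).symm

noncomputable def invOf {A : Matrix n n ℂ} (hA : A.PosDef) : Invertible A :=
  A.invertibleOfIsUnitDet (A.isUnit_iff_isUnit_det.mp hA.isUnit)

lemma inv_add_inv_inv {A B : Matrix n n ℂ} (hA : A.PosDef) (hB : B.PosDef) :
    (A⁻¹ + B⁻¹)⁻¹ = A * (A + B)⁻¹ * B := by
  haveI := invOf hA
  haveI := invOf hB
  haveI := invOf (hA.add hB)
  have h1 : A⁻¹ + B⁻¹ = B⁻¹ * (A + B) * A⁻¹ := by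
    rw [mul_add, add_mul, Matrix.inv_mul_of_invertible, one_mul,
      Matrix.mul_inv_cancel_right_of_invertible, add_comm]
  rw [h1, Matrix.mul_inv_rev, Matrix.mul_inv_rev, Matrix.inv_inv_of_invertible,
    Matrix.inv_inv_of_invertible, Matrix.mul_assoc]

lemma inv_add_inv_inv' {A B : Matrix n n ℂ} (hA : A.PosDef) (hB : B.PosDef) :
    (A⁻¹ + B⁻¹)⁻¹ = B * (A + B)⁻¹ * A := by
  have := inv_add_inv_inv hB hA
  rwa [add_comm B⁻¹ A⁻¹, add_comm B A] at this

/-- Key decomposition: there are PSD matrices `M j` and real coefficients `c j` with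
`∑ M j = A - P`, `∑ c j • M j = - P`, `∑ (c j)^2 • M j = B - P` where `P = (A⁻¹+B⁻¹)⁻¹`. -/
lemma exists_decomposition {A B : Matrix n n ℂ} (hA : A.PosDef) (hB : B.PosDef) :
    ∃ (M : n → Matrix n n ℂ) (c : n → ℂ),
      (∀ j, (M j).PosSemidef) ∧ (∀ j, star (c j) = c j) ∧
      (∑ j, M j) = A - (A⁻¹ + B⁻¹)⁻¹ ∧
      (∑ j, c j • M j) = -(A⁻¹ + B⁻¹)⁻¹ ∧
      (∑ j, (c j * c j) • M j) = B - (A⁻¹ + B⁻¹)⁻¹ := by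
  haveI := invOf hA
  haveI := invOf hB
  have hABpd : (A + B).PosDef := hA.add hB
  haveI := invOf hABpd
  haveI : Invertible ((A + B)⁻¹) := Matrix.invertibleOfIsUnitDet _
    ((Matrix.isUnit_iff_isUnit_det _).mp hABpd.inv.isUnit)
  set P : Matrix n n ℂ := (A⁻¹ + B⁻¹)⁻¹ with hPdef
  have hP : P = A * (A + B)⁻¹ * B := inv_add_inv_inv hA hB
  have hP' : P = B * (A + B)⁻¹ * A := inv_add_inv_inv' hA hB
  have hPpd : P.PosDef := (hA.inv.add hB.inv).inv
  have hRAB : (A + B)⁻¹ * (A + B) = 1 := Matrix.inv_mul_of_invertible (A + B)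
  -- A - P = A * (A + B)⁻¹ * A
  have hCdef : A - P = A * (A + B)⁻¹ * A := by
    have h1 : A * (A + B)⁻¹ * A + P = A := by
      rw [hP]
      calc A * (A + B)⁻¹ * A + A * (A + B)⁻¹ * B = A * (A + B)⁻¹ * (A + B) := (mul_add (A * (A + B)⁻¹) A B).symm
        _ = A * ((A + B)⁻¹ * (A + B)) := Matrix.mul_assoc _ _ _
        _ = A := by rw [hRAB, mul_one]
    exact (eq_sub_of_add_eq h1).symm
  have hBP : B - P = B * (A + B)⁻¹ * B := by
    have h1 : B * (A + B)⁻¹ * B + P = B := by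
      rw [hP']
      calc B * (A + B)⁻¹ * B + B * (A + B)⁻¹ * A
          = B * (A + B)⁻¹ * (B + A) := (mul_add (B * (A + B)⁻¹) B A).symm
        _ = B * ((A + B)⁻¹ * (A + B)) := by rw [add_comm B A, Matrix.mul_assoc]
        _ = B := by rw [hRAB, mul_one]
    exact (eq_sub_of_add_eq h1).symm
  set C : Matrix n n ℂ := A * (A + B)⁻¹ * A with hCdef2
  haveI : Invertible (A * (A + B)⁻¹) := invertibleMul _ _
  haveI : Invertible C := by rw [hCdef2]; exact invertibleMul _ _
  have hCpsd : C.PosSemidef := by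
    have h := (hABpd.inv.posSemidef).conjTranspose_mul_mul_same A
    rwa [hA.isHermitian.eq] at h
  set E : Matrix n n ℂ := (open scoped MatrixOrder in CFC.sqrt C) with hEdef
  have hE2 : E * E = C := by open scoped MatrixOrder in exact CFC.sqrt_mul_sqrt_self C hCpsd.nonneg
  have hEH : E.IsHermitian := by open scoped MatrixOrder in exact (CFC.sqrt_nonneg C).posSemidef.isHermitian
  haveI : Invertible E := by
    apply E.invertibleOfIsUnitDet
    rw [isUnit_iff_ne_zero]
    have hC : IsUnit C.det := C.isUnit_iff_isUnit_det.mp (isUnit_of_invertible C)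
    have : E.det * E.det ≠ 0 := by rw [← Matrix.det_mul, hE2]; exact hC.ne_zero
    exact left_ne_zero_of_mul this
  set S : Matrix n n ℂ := -(E⁻¹ * P * E⁻¹) with hSdef
  have hEinvH : (E⁻¹).IsHermitian := hEH.inv
  have hSH : S.IsHermitian := by
    have h := Matrix.isHermitian_conjTranspose_mul_mul E⁻¹ hPpd.isHermitian
    rw [hEinvH.eq] at h
    exact h.neg
  set U : Matrix n n ℂ := (Matrix.IsHermitian.eigenvectorUnitary hSH : Matrix n n ℂ) with hUdef
  have hU1 : U * Uᴴ = 1 := by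
    rw [← Matrix.star_eq_conjTranspose]
    exact (Matrix.mem_unitaryGroup_iff).mp (Matrix.IsHermitian.eigenvectorUnitary hSH).2
  have hU2 : Uᴴ * U = 1 := by
    rw [← Matrix.star_eq_conjTranspose]
    exact (Matrix.mem_unitaryGroup_iff').mp (Matrix.IsHermitian.eigenvectorUnitary hSH).2
  set c : n → ℂ := fun j => (RCLike.ofReal (hSH.eigenvalues j) : ℂ) with hcdef
  have hspec : U * Matrix.diagonal c * Uᴴ = S := by
    rw [← Matrix.star_eq_conjTranspose]
    exact (hSH.spectral_theorem).symm
  have hstdH : ∀ j : n, (Matrix.single j j (1:ℂ))ᴴ = Matrix.single j j 1 := by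
    intro j
    ext a b
    simp only [Matrix.conjTranspose_apply, Matrix.single, Matrix.of_apply,
      apply_ite (star : ℂ → ℂ), star_one, star_zero]
    exact if_congr and_comm rfl rfl
  have hkey : ∀ c' : n → ℂ,
      (∑ j, c' j • (E * (U * Matrix.single j j 1 * Uᴴ) * E))
        = E * (U * Matrix.diagonal c' * Uᴴ) * E := by
    intro c'
    rw [diagonal_eq_sum_std c']
    simp only [Finset.mul_sum, Finset.sum_mul, smul_mul_assoc, mul_smul_comm]
  refine ⟨fun j => E * (U * Matrix.single j j 1 * Uᴴ) * E, c, ?_, ?_, ?_, ?_, ?_⟩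
  · intro j
    have h := Matrix.posSemidef_conjTranspose_mul_self (Matrix.single j j 1 * Uᴴ * E)
    have he : (Matrix.single j j 1 * Uᴴ * E)ᴴ * (Matrix.single j j 1 * Uᴴ * E)
        = E * (U * Matrix.single j j 1 * Uᴴ) * E := by
      rw [Matrix.conjTranspose_mul, Matrix.conjTranspose_mul, Matrix.conjTranspose_conjTranspose,
        hEH.eq, hstdH j]
      simp only [Matrix.mul_assoc]
      rw [show Matrix.single j j (1:ℂ) * (Matrix.single j j 1 * (Uᴴ * E))
          = Matrix.single j j 1 * (Uᴴ * E) from by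
        rw [← Matrix.mul_assoc, Matrix.single_mul_single_same, one_mul]]
    show (E * (U * Matrix.single j j 1 * Uᴴ) * E).PosSemidef
    rw [← he]
    exact h
  · intro j
    rw [hcdef]
    exact RCLike.conj_ofReal _
  · have h := hkey (fun _ => 1)
    simp only [one_smul, Matrix.diagonal_one, Matrix.mul_one] at h
    rw [h, hU1, Matrix.mul_one, hE2]
    exact hCdef.symm
  · rw [hkey c, hspec, hSdef]
    simp only [Matrix.mul_neg, Matrix.neg_mul, ← Matrix.mul_assoc]
    rw [Matrix.mul_inv_of_invertible, one_mul, Matrix.inv_mul_cancel_right_of_invertible]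
  · rw [hkey (fun j => c j * c j)]
    have hdd : Matrix.diagonal (fun j => c j * c j)
        = Matrix.diagonal c * Matrix.diagonal c := (Matrix.diagonal_mul_diagonal _ _).symm
    have hUDU : U * Matrix.diagonal (fun j => c j * c j) * Uᴴ = S * S := by
      rw [← hspec, hdd]
      calc U * (Matrix.diagonal c * Matrix.diagonal c) * Uᴴ
          = U * Matrix.diagonal c * ((Uᴴ * U) * (Matrix.diagonal c * Uᴴ)) := by
            rw [hU2, one_mul]
            simp only [Matrix.mul_assoc]
        _ = U * Matrix.diagonal c * Uᴴ * (U * Matrix.diagonal c * Uᴴ) := by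
            simp only [Matrix.mul_assoc]
    rw [hUDU, hSdef, neg_mul_neg]
    have hCinv : E⁻¹ * E⁻¹ = C⁻¹ := by rw [← Matrix.mul_inv_rev, hE2]
    have hE1 : E * (E⁻¹ * P * E⁻¹ * (E⁻¹ * P * E⁻¹)) * E = P * C⁻¹ * P := by
      simp only [← Matrix.mul_assoc]
      rw [Matrix.mul_inv_of_invertible, one_mul, Matrix.inv_mul_cancel_right_of_invertible]
      simp only [Matrix.mul_assoc]
      rw [← hCinv]
      simp only [Matrix.mul_assoc]
    rw [hE1]
    -- P * C⁻¹ * P = B - P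
    rw [hBP]
    nth_rewrite 1 [hP']
    rw [hP, hCdef2]
    simp only [Matrix.mul_inv_rev, Matrix.inv_inv_of_invertible]
    simp only [Matrix.mul_assoc, Matrix.mul_inv_cancel_left_of_invertible,
      Matrix.inv_mul_cancel_left_of_invertible]


/-- A positive linear map is subadditive w.r.t. the parallel sum:
`Φ(A : B) ⪯ Φ(A) : Φ(B)` where `A : B = (A⁻¹ + B⁻¹)⁻¹`. -/
theorem positive_map_parallel_sum {k : Type*} [Fintype k] [DecidableEq k]
    (Φ : Matrix n n ℂ →ₗ[ℂ] Matrix k k ℂ)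
    (hpos : ∀ M : Matrix n n ℂ, M.PosSemidef → (Φ M).PosSemidef)
    (hspos : ∀ M : Matrix n n ℂ, M.PosDef → (Φ M).PosDef)
    {A B : Matrix n n ℂ} (hA : A.PosDef) (hB : B.PosDef) :
    LoewnerLE (Φ ((A⁻¹ + B⁻¹)⁻¹)) (((Φ A)⁻¹ + (Φ B)⁻¹)⁻¹) := by
  obtain ⟨M, c, hMpsd, hcstar, hsum1, hsum2, hsum3⟩ := exists_decomposition hA hB
  have hA2 : (Φ A).PosDef := hspos A hA
  have hB2 : (Φ B).PosDef := hspos B hB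
  haveI := invOf hA2
  haveI := invOf hB2
  have hG : (Φ A + Φ B).PosDef := hA2.add hB2
  haveI := invOf hG
  set V : Matrix k k ℂ := (Φ A + Φ B)⁻¹ * Φ B with hVdef
  set W : Matrix k k ℂ := (Φ A + Φ B)⁻¹ * Φ A with hWdef
  have hVW : V + W = 1 := by
    rw [hVdef, hWdef, ← mul_add, add_comm (Φ B) (Φ A), Matrix.inv_mul_of_invertible]
  have hRH : ((Φ A + Φ B)⁻¹).IsHermitian := hG.inv.isHermitian
  have hVH : Vᴴ = Φ B * (Φ A + Φ B)⁻¹ := by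
    rw [hVdef, Matrix.conjTranspose_mul, hRH.eq, hB2.isHermitian.eq]
  have hWH : Wᴴ = Φ A * (Φ A + Φ B)⁻¹ := by
    rw [hWdef, Matrix.conjTranspose_mul, hRH.eq, hA2.isHermitian.eq]
  have hQ : ((Φ A)⁻¹ + (Φ B)⁻¹)⁻¹ = Φ A * (Φ A + Φ B)⁻¹ * Φ B := inv_add_inv_inv hA2 hB2
  have hQ' : ((Φ A)⁻¹ + (Φ B)⁻¹)⁻¹ = Φ B * (Φ A + Φ B)⁻¹ * Φ A := inv_add_inv_inv' hA2 hB2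
  have hQc : Φ B * (Φ A + Φ B)⁻¹ * Φ A = Φ A * (Φ A + Φ B)⁻¹ * Φ B := by rw [← hQ, ← hQ']
  -- expansion of each summand
  have hexp : ∀ j, (V + c j • W)ᴴ * Φ (M j) * (V + c j • W)
      = Vᴴ * Φ (M j) * V + (Vᴴ * Φ (c j • M j) * W + Wᴴ * Φ (c j • M j) * V)
        + Wᴴ * Φ ((c j * c j) • M j) * W := by
    intro j
    rw [Matrix.conjTranspose_add, Matrix.conjTranspose_smul, hcstar j, Φ.map_smul, Φ.map_smul]
    simp only [add_mul, mul_add, smul_mul_assoc, mul_smul_comm, smul_smul, smul_add]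
    abel
  have h1 : Vᴴ * Φ A * V + Wᴴ * Φ B * W = Φ A * (Φ A + Φ B)⁻¹ * Φ B := by
    rw [hVH, hWH, Matrix.mul_assoc (Φ B * (Φ A + Φ B)⁻¹), Matrix.mul_assoc (Φ A * (Φ A + Φ B)⁻¹)]
    rw [← Matrix.mul_assoc (Φ B), ← Matrix.mul_assoc (Φ A), hQc]
    rw [← add_mul, ← add_mul, add_comm (Φ B) (Φ A), Matrix.mul_inv_of_invertible, one_mul]
  have h2 : Vᴴ * Φ ((A⁻¹ + B⁻¹)⁻¹) * V + Vᴴ * Φ ((A⁻¹ + B⁻¹)⁻¹) * W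
      + Wᴴ * Φ ((A⁻¹ + B⁻¹)⁻¹) * V + Wᴴ * Φ ((A⁻¹ + B⁻¹)⁻¹) * W = Φ ((A⁻¹ + B⁻¹)⁻¹) := by
    have h3 : (Vᴴ + Wᴴ) * Φ ((A⁻¹ + B⁻¹)⁻¹) * (V + W) = Φ ((A⁻¹ + B⁻¹)⁻¹) := by
      rw [← Matrix.conjTranspose_add, hVW, Matrix.conjTranspose_one, one_mul, mul_one]
    calc Vᴴ * Φ ((A⁻¹ + B⁻¹)⁻¹) * V + Vᴴ * Φ ((A⁻¹ + B⁻¹)⁻¹) * W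
        + Wᴴ * Φ ((A⁻¹ + B⁻¹)⁻¹) * V + Wᴴ * Φ ((A⁻¹ + B⁻¹)⁻¹) * W
        = (Vᴴ + Wᴴ) * Φ ((A⁻¹ + B⁻¹)⁻¹) * (V + W) := by
          simp only [add_mul, mul_add]
          abel
      _ = Φ ((A⁻¹ + B⁻¹)⁻¹) := h3
  have e1 : Vᴴ * Φ (A - (A⁻¹ + B⁻¹)⁻¹) * V = ∑ j, Vᴴ * Φ (M j) * V := by
    rw [← hsum1, map_sum, Finset.mul_sum, Finset.sum_mul]
  have e2 : Vᴴ * Φ (-(A⁻¹ + B⁻¹)⁻¹) * W = ∑ j, Vᴴ * Φ (c j • M j) * W := by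
    rw [← hsum2, map_sum, Finset.mul_sum, Finset.sum_mul]
  have e3 : Wᴴ * Φ (-(A⁻¹ + B⁻¹)⁻¹) * V = ∑ j, Wᴴ * Φ (c j • M j) * V := by
    rw [← hsum2, map_sum, Finset.mul_sum, Finset.sum_mul]
  have e4 : Wᴴ * Φ (B - (A⁻¹ + B⁻¹)⁻¹) * W = ∑ j, Wᴴ * Φ ((c j * c j) • M j) * W := by
    rw [← hsum3, map_sum, Finset.mul_sum, Finset.sum_mul]
  have hiden : (((Φ A)⁻¹ + (Φ B)⁻¹)⁻¹) - Φ ((A⁻¹ + B⁻¹)⁻¹)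
      = ∑ j, (V + c j • W)ᴴ * Φ (M j) * (V + c j • W) := by
    calc (((Φ A)⁻¹ + (Φ B)⁻¹)⁻¹) - Φ ((A⁻¹ + B⁻¹)⁻¹)
        = (Vᴴ * Φ A * V + Wᴴ * Φ B * W)
          - (Vᴴ * Φ ((A⁻¹ + B⁻¹)⁻¹) * V + Vᴴ * Φ ((A⁻¹ + B⁻¹)⁻¹) * W
            + Wᴴ * Φ ((A⁻¹ + B⁻¹)⁻¹) * V + Wᴴ * Φ ((A⁻¹ + B⁻¹)⁻¹) * W) := by
          rw [h1, h2, hQ]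
      _ = Vᴴ * Φ (A - (A⁻¹ + B⁻¹)⁻¹) * V
          + (Vᴴ * Φ (-(A⁻¹ + B⁻¹)⁻¹) * W + Wᴴ * Φ (-(A⁻¹ + B⁻¹)⁻¹) * V)
          + Wᴴ * Φ (B - (A⁻¹ + B⁻¹)⁻¹) * W := by
          rw [map_sub, map_sub, map_neg]
          simp only [mul_sub, sub_mul, mul_neg, neg_mul, Matrix.neg_mul, Matrix.mul_neg]
          abel
      _ = ∑ j, (V + c j • W)ᴴ * Φ (M j) * (V + c j • W) := by
          rw [e1, e2, e3, e4]
          simp only [← Finset.sum_add_distrib]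
          exact Finset.sum_congr rfl fun j _ => (hexp j).symm
  show ((((Φ A)⁻¹ + (Φ B)⁻¹)⁻¹) - Φ ((A⁻¹ + B⁻¹)⁻¹)).PosSemidef
  rw [hiden]
  exact Finset.sum_induction _ _ (fun a b ha hb => ha.add hb) Matrix.PosSemidef.zero
    (fun j _ => (hpos _ (hMpsd j)).conjTranspose_mul_mul_same _)

end CGO
end

section
/- For Hermitian positive definite matrices A, B, a full-column-rank matrix X ∈ ℂ^{d×k}, and t ∈ [0,1], it holds that trace(X*(A #_t B)X) ≤ [trace(X*AX)]^{1-t} · [trace(X*BX)]^t. -/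
set_option linter.unusedSectionVars false

namespace CGO

open Matrix
open scoped ComplexOrder

variable {n : Type*} [Fintype n] [DecidableEq n]

lemma aux_cfc_mul {A : Matrix n n ℂ} (hA : A.IsHermitian) (f g : ℝ → ℝ) :
    hA.cfc f * hA.cfc g = hA.cfc fun x => f x * g x := by
  have h : (star (hA.eigenvectorUnitary : Matrix n n ℂ)) *
      (hA.eigenvectorUnitary : Matrix n n ℂ) = 1 :=
    Unitary.star_mul_self_of_mem (SetLike.coe_mem _)
  simp only [Matrix.IsHermitian.cfc, Unitary.conjStarAlgAut_apply, Unitary.coe_star]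
  rw [show ∀ a b c d e g' : Matrix n n ℂ, (a*b*c)*(d*e*g') = a*(b*(c*d)*e)*g' from
    by intros; simp only [mul_assoc], h, mul_one, diagonal_mul_diagonal]
  rw [show (fun i => ((RCLike.ofReal : ℝ → ℂ) ∘ f ∘ hA.eigenvalues) i *
      ((RCLike.ofReal : ℝ → ℂ) ∘ g ∘ hA.eigenvalues) i) =
      ((RCLike.ofReal : ℝ → ℂ) ∘ (fun x => f x * g x) ∘ hA.eigenvalues) from by
    funext i; simp [Function.comp]]

lemma aux_cfc_congr {A : Matrix n n ℂ} (hA : A.IsHermitian) {f g : ℝ → ℝ}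
    (h : ∀ i, f (hA.eigenvalues i) = g (hA.eigenvalues i)) : hA.cfc f = hA.cfc g := by
  simp only [Matrix.IsHermitian.cfc]
  rw [show ((RCLike.ofReal : ℝ → ℂ) ∘ f ∘ hA.eigenvalues) =
      ((RCLike.ofReal : ℝ → ℂ) ∘ g ∘ hA.eigenvalues) from by
    funext i; simp [Function.comp, h i]]

lemma aux_cfc_one {A : Matrix n n ℂ} (hA : A.IsHermitian) :
    hA.cfc (fun _ => 1) = 1 := by
  have h : (hA.eigenvectorUnitary : Matrix n n ℂ) *
      (star (hA.eigenvectorUnitary : Matrix n n ℂ)) = 1 :=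
    Unitary.mul_star_self_of_mem (SetLike.coe_mem _)
  rw [Matrix.IsHermitian.cfc, Unitary.conjStarAlgAut_apply]
  rw [show ((RCLike.ofReal : ℝ → ℂ) ∘ (fun _ => (1:ℝ)) ∘ hA.eigenvalues) =
      (fun _ => (1:ℂ)) from by funext i; simp [Function.comp]]
  rw [diagonal_one, mul_one, h]

lemma aux_cfc_id {A : Matrix n n ℂ} (hA : A.IsHermitian) :
    hA.cfc id = A := by
  rw [Matrix.IsHermitian.cfc, Function.id_comp]
  exact hA.spectral_theorem.symm

lemma aux_trace_conj_cfc {k : Type*} [Fintype k] {A : Matrix n n ℂ} (hA : A.IsHermitian)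
    (f : ℝ → ℝ) (Y : Matrix n k ℂ) :
    Matrix.trace (Yᴴ * hA.cfc f * Y) =
      ((∑ i, f (hA.eigenvalues i) *
        ∑ j, Complex.normSq ((star (hA.eigenvectorUnitary : Matrix n n ℂ) * Y) i j) : ℝ) : ℂ) := by
  set U : Matrix n n ℂ := (hA.eigenvectorUnitary : Matrix n n ℂ) with hU
  set Z : Matrix n k ℂ := star U * Y with hZ
  have hZH : Zᴴ = Yᴴ * U := by
    rw [hZ, star_eq_conjTranspose, conjTranspose_mul, conjTranspose_conjTranspose]
  have e : Yᴴ * hA.cfc f * Y =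
      Zᴴ * diagonal ((RCLike.ofReal : ℝ → ℂ) ∘ f ∘ hA.eigenvalues) * Z := by
    rw [Matrix.IsHermitian.cfc, Unitary.conjStarAlgAut_apply, hZH, hZ, ← hU]
    simp only [Matrix.mul_assoc]
  rw [e, Matrix.trace]
  simp only [diag_apply, Matrix.mul_apply, conjTranspose_apply, diagonal_apply,
    Function.comp_apply]
  push_cast
  rw [Finset.sum_comm]
  refine Finset.sum_congr rfl fun y _ => ?_
  rw [Finset.mul_sum]
  refine Finset.sum_congr rfl fun x _ => ?_
  simp only [mul_ite, mul_zero, Finset.sum_ite_eq', Finset.mem_univ, if_true]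
  rw [Complex.normSq_eq_conj_mul_self]
  simp only [Complex.star_def]
  ring_nf
  norm_cast
  exact mul_right_comm _ _ _

lemma aux_holder {ι : Type*} [Fintype ι] (m lam : ι → ℝ) (hm : ∀ i, 0 ≤ m i)
    (hlam : ∀ i, 0 ≤ lam i) {t : ℝ} (ht0 : 0 ≤ t) (ht1 : t ≤ 1) :
    ∑ i, lam i ^ t * m i ≤ (∑ i, m i) ^ (1 - t) * (∑ i, lam i * m i) ^ t := by
  rcases eq_or_lt_of_le ht0 with rfl | htpos
  · simp [Real.rpow_zero]
  have hβ : 0 ≤ ∑ i, lam i * m i :=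
    Finset.sum_nonneg fun i _ => mul_nonneg (hlam i) (hm i)
  rcases eq_or_lt_of_le (Finset.sum_nonneg (fun i _ => hm i) : 0 ≤ ∑ i, m i) with hα | hα
  · have hz : ∀ i ∈ Finset.univ, m i = 0 :=
      (Finset.sum_eq_zero_iff_of_nonneg (fun i _ => hm i)).mp hα.symm
    have h1 : ∑ i, lam i ^ t * m i = 0 :=
      Finset.sum_eq_zero fun i hi => by rw [hz i hi, mul_zero]
    rw [h1]
    positivity
  · set α := ∑ i, m i with hαdef
    set β := ∑ i, lam i * m i with hβdef
    have key := Real.arith_mean_le_rpow_mean Finset.univ (fun i => m i / α)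
      (fun i => lam i ^ t) (fun i _ => div_nonneg (hm i) hα.le)
      (by rw [← Finset.sum_div, div_self hα.ne'])
      (fun i _ => Real.rpow_nonneg (hlam i) t) (p := 1/t)
      (by rw [le_div_iff₀ htpos]; linarith)
    have hz : ∀ i, (lam i ^ t) ^ (1/t : ℝ) = lam i := by
      intro i
      rw [← Real.rpow_mul (hlam i), mul_one_div_cancel htpos.ne', Real.rpow_one]
    simp only [hz, one_div_one_div] at key
    have hsum : ∑ i, (m i / α) * lam i = β / α := by
      rw [hβdef, Finset.sum_div]
      congr 1
      funext i
      ring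
    rw [hsum] at key
    have hLHS : ∑ i, lam i ^ t * m i = α * ∑ i, (m i / α) * lam i ^ t := by
      rw [Finset.mul_sum]
      congr 1
      funext i
      field_simp
    rw [hLHS]
    calc α * ∑ i, (m i / α) * lam i ^ t ≤ α * (β / α) ^ t :=
          mul_le_mul_of_nonneg_left key hα.le
      _ = α ^ (1 - t) * β ^ t := by
          rw [Real.div_rpow hβ hα.le, Real.rpow_sub hα, Real.rpow_one]
          ring

/-- `trace(X*(A #ₜ B)X) ≤ [trace(X*AX)]^{1-t} [trace(X*BX)]^t`. -/
theorem trace_wgmean_le_geom {d k : ℕ} {A B : Matrix (Fin d) (Fin d) ℂ}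
    (hA : A.PosDef) (hB : B.PosDef) (X : Matrix (Fin d) (Fin k) ℂ)
    (hX : Function.Injective X.mulVecLin)
    {t : ℝ} (ht : t ∈ Set.Icc (0 : ℝ) 1) :
    (Matrix.trace (Xᴴ * wgmean hA hB t * X)).re ≤
      (Matrix.trace (Xᴴ * A * X)).re ^ (1 - t) * (Matrix.trace (Xᴴ * B * X)).re ^ t := by
  obtain ⟨ht0, ht1⟩ := ht
  have hSH := mpow_isHermitian hA.1 (1/2)
  have hSiH := mpow_isHermitian hA.1 (-(1/2))
  have hCH := mul_mul_isHermitian hSiH hB.1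
  have hAeig : ∀ i, 0 < hA.1.eigenvalues i := hA.eigenvalues_pos
  have hSSi : mpow hA.1 (1/2) * mpow hA.1 (-(1/2)) = 1 := by
    rw [mpow, mpow, aux_cfc_mul,
      aux_cfc_congr hA.1 (g := fun _ => 1) (fun i => by
        rw [← Real.rpow_add (hAeig i)]; norm_num), aux_cfc_one]
  have hSiS : mpow hA.1 (-(1/2)) * mpow hA.1 (1/2) = 1 := by
    rw [mpow, mpow, aux_cfc_mul,
      aux_cfc_congr hA.1 (g := fun _ => 1) (fun i => by
        rw [← Real.rpow_add (hAeig i)]; norm_num), aux_cfc_one]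
  have hSS : mpow hA.1 (1/2) * mpow hA.1 (1/2) = A := by
    rw [mpow, aux_cfc_mul,
      aux_cfc_congr hA.1 (g := id) (fun i => by
        rw [← Real.rpow_add (hAeig i)]; norm_num), aux_cfc_id]
  have hCpsd : (mpow hA.1 (-(1/2)) * B * mpow hA.1 (-(1/2))).PosSemidef := by
    have h := hB.posSemidef.mul_mul_conjTranspose_same (mpow hA.1 (-(1/2)))
    rwa [hSiH.eq] at h
  have hlam : ∀ i, 0 ≤ hCH.eigenvalues i := fun i => hCpsd.eigenvalues_nonneg i
  set Y : Matrix (Fin d) (Fin k) ℂ := mpow hA.1 (1/2) * X with hY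
  have e1 : Matrix.trace (Xᴴ * wgmean hA hB t * X) =
      ((∑ i, (hCH.eigenvalues i) ^ t *
        ∑ j, Complex.normSq ((star (hCH.eigenvectorUnitary : Matrix (Fin d) (Fin d) ℂ) * Y) i j)
        : ℝ) : ℂ) := by
    have h1 : Xᴴ * wgmean hA hB t * X = Yᴴ * hCH.cfc (fun x => x ^ t) * Y := by
      rw [hY, wgmean, conjTranspose_mul, hSH.eq]
      simp only [Matrix.mul_assoc]
      rfl
    rw [h1, aux_trace_conj_cfc]
  have e2 : Matrix.trace (Xᴴ * A * X) =
      ((∑ i,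
        ∑ j, Complex.normSq ((star (hCH.eigenvectorUnitary : Matrix (Fin d) (Fin d) ℂ) * Y) i j)
        : ℝ) : ℂ) := by
    have h2 : Xᴴ * A * X = Yᴴ * hCH.cfc (fun _ => 1) * Y := by
      rw [aux_cfc_one, Matrix.mul_one, hY, conjTranspose_mul, hSH.eq,
        show Xᴴ * mpow hA.1 (1/2) * (mpow hA.1 (1/2) * X) =
          Xᴴ * (mpow hA.1 (1/2) * mpow hA.1 (1/2)) * X from by
            simp only [Matrix.mul_assoc], hSS]
    rw [h2, aux_trace_conj_cfc]
    norm_num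
  have e3 : Matrix.trace (Xᴴ * B * X) =
      ((∑ i, hCH.eigenvalues i *
        ∑ j, Complex.normSq ((star (hCH.eigenvectorUnitary : Matrix (Fin d) (Fin d) ℂ) * Y) i j)
        : ℝ) : ℂ) := by
    have h3 : Yᴴ * hCH.cfc id * Y = Xᴴ * B * X := by
      rw [aux_cfc_id, hY, conjTranspose_mul, hSH.eq]
      calc Xᴴ * mpow hA.1 (1/2) *
            (mpow hA.1 (-(1/2)) * B * mpow hA.1 (-(1/2))) * (mpow hA.1 (1/2) * X)
          = Xᴴ * ((mpow hA.1 (1/2) * mpow hA.1 (-(1/2))) * B *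
              (mpow hA.1 (-(1/2)) * mpow hA.1 (1/2))) * X := by
            simp only [Matrix.mul_assoc]
        _ = Xᴴ * B * X := by rw [hSSi, hSiS, one_mul, mul_one]
    rw [← h3, aux_trace_conj_cfc]
    norm_num
  rw [e1, e2, e3, Complex.ofReal_re, Complex.ofReal_re, Complex.ofReal_re]
  exact aux_holder _ _ (fun i => Finset.sum_nonneg fun j _ => Complex.normSq_nonneg _)
    hlam ht0 ht1


end CGO
end

section
/- For positive definite matrices A, B ∈ P_n and t ∈ [0,1], the eigenvalues satisfy the log-majorisation λ(A^{1-t} B^t) ≺_log λ(A)^{1-t} λ(B)^t, i.e., for each k, ∏_{j=1}^k λ_j^↓(A^{1-t}B^t) ≤ ∏_{j=1}^k (λ_j^↓(A))^{1-t}(λ_j^↓(B))^t, with equality for k = n. -/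
set_option linter.unusedSectionVars false

namespace CGO

open Matrix
open scoped ComplexOrder

variable {n : Type*} [Fintype n] [DecidableEq n]

/-! ### Auxiliary material: compound matrices, Cauchy–Binet, quadratic forms -/

section Compound

open Finset Equiv

variable {d k : ℕ}

/-- Index type: subsets of `Fin d` of cardinality `k`. -/
abbrev SK (d k : ℕ) := {s : Finset (Fin d) // s.card = k}

/-- The increasing enumeration of a `k`-subset. -/
def embOf (s : SK d k) : Fin k → Fin d := s.1.orderEmbOfFin s.2

lemma embOf_injective (s : SK d k) : Function.Injective (embOf s) :=
  (s.1.orderEmbOfFin s.2).injective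

lemma image_embOf (s : SK d k) : Finset.image (embOf s) Finset.univ = s.1 := by
  apply Finset.coe_injective
  rw [Finset.coe_image, Finset.coe_univ, Set.image_univ]
  exact Finset.range_orderEmbOfFin s.1 s.2

lemma prod_embOf {M : Type*} [CommMonoid M] (s : SK d k) (v : Fin d → M) :
    ∏ j : Fin k, v (embOf s j) = ∏ i ∈ s.1, v i := by
  rw [← image_embOf s, Finset.prod_image (fun a _ b _ h => embOf_injective s h)]

/-- The `k`-th compound matrix (matrix of `k×k` minors). -/
noncomputable def cpd (k : ℕ) (M : Matrix (Fin d) (Fin d) ℂ) : Matrix (SK d k) (SK d k) ℂ :=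
  fun s u => (M.submatrix (embOf s) (embOf u)).det

lemma cpd_conjTranspose (M : Matrix (Fin d) (Fin d) ℂ) :
    cpd k Mᴴ = (cpd k M)ᴴ := by
  ext s u
  simp only [cpd, conjTranspose_apply]
  rw [← Matrix.conjTranspose_submatrix, Matrix.det_conjTranspose]

lemma cpd_diagonal (v : Fin d → ℂ) :
    cpd k (diagonal v) = diagonal (fun s : SK d k => ∏ i ∈ s.1, v i) := by
  ext s u
  by_cases h : s = u
  · subst h
    rw [diagonal_apply_eq]
    have : (diagonal v).submatrix (embOf s) (embOf s) = diagonal (fun j => v (embOf s j)) := by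
      ext i j
      by_cases hij : i = j
      · subst hij; simp [diagonal_apply_eq]
      · rw [Matrix.submatrix_apply, diagonal_apply_ne _ hij,
          diagonal_apply_ne _ (fun hc => hij (embOf_injective s hc))]
    rw [cpd, this, det_diagonal, prod_embOf]
  · rw [diagonal_apply_ne _ h]
    have hsu : ¬ s.1 ⊆ u.1 := by
      intro hsub
      exact h (Subtype.ext (Finset.eq_of_subset_of_card_le hsub (by rw [s.2, u.2])))
    obtain ⟨a, ha, hau⟩ := Finset.not_subset.1 hsu
    obtain ⟨i, hi⟩ : ∃ i, embOf s i = a := by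
      have := image_embOf s
      rw [← this] at ha
      obtain ⟨i, _, hi⟩ := Finset.mem_image.1 ha
      exact ⟨i, hi⟩
    apply Matrix.det_eq_zero_of_row_eq_zero i
    intro j
    rw [Matrix.submatrix_apply, hi]
    apply diagonal_apply_ne
    intro hc
    exact hau (hc ▸ Finset.orderEmbOfFin_mem u.1 u.2 j)

lemma cpd_one : cpd k (1 : Matrix (Fin d) (Fin d) ℂ) = 1 := by
  rw [← diagonal_one, cpd_diagonal, ← diagonal_one]
  ext s
  simp

local notation "ε " σ => ((Equiv.Perm.sign σ : ℤ) : ℂ)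

/-- Tail of mathlib's `det_mul` computation. -/
lemma det_sum_perm (X Y : Matrix (Fin k) (Fin k) ℂ) :
    ∑ τ : Perm (Fin k), ∑ σ : Perm (Fin k), (ε σ) * ∏ i, X (σ i) (τ i) * Y (τ i) i
      = det X * det Y :=
  calc
    _ = ∑ σ : Perm (Fin k), ∑ τ : Perm (Fin k),
        (∏ i, Y (σ i) i) * (ε τ) * ∏ j, X (τ j) (σ j) := by
      simp only [mul_comm, mul_left_comm, prod_mul_distrib, mul_assoc]
    _ = ∑ σ : Perm (Fin k), ∑ τ : Perm (Fin k),
        (∏ i, Y (σ i) i) * ((ε σ) * ε τ) * ∏ i, X (τ i) i :=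
      (Finset.sum_congr rfl fun σ _ =>
        Fintype.sum_equiv (Equiv.mulRight σ⁻¹) _ _ fun τ => by
          have : (∏ j, X (τ j) (σ j)) = ∏ j, X ((τ * σ⁻¹) j) j := by
            rw [← (σ⁻¹ : _ ≃ _).prod_comp]
            simp only [Equiv.Perm.coe_mul, Equiv.Perm.inv_def, Equiv.apply_symm_apply, Function.comp_apply]
          have h : (ε σ) * (ε (τ * σ⁻¹)) = ε τ :=
            calc
              (ε σ) * (ε (τ * σ⁻¹)) = ε ((τ * σ⁻¹) * σ) := by
                rw [mul_comm, Equiv.Perm.sign_mul (τ * σ⁻¹)]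
                simp only [Int.cast_mul, Units.val_mul]
              _ = ε τ := by simp only [inv_mul_cancel_right]
          simp_rw [Equiv.coe_mulRight, h]
          simp only [this])
    _ = det X * det Y := by
      simp only [det_apply', Finset.mul_sum, mul_comm, mul_left_comm, mul_assoc]

lemma det_rect_mul_aux {A : Matrix (Fin k) (Fin d) ℂ} {B : Matrix (Fin d) (Fin k) ℂ}
    {p : Fin k → Fin d} (H : ¬Function.Injective p) :
    (∑ σ : Perm (Fin k), (ε σ) * ∏ x, A (σ x) (p x) * B (p x) x) = 0 := by
  obtain ⟨i, j, hpij, hij⟩ : ∃ i j, p i = p j ∧ i ≠ j := by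
    rw [Function.Injective] at H
    push_neg at H
    obtain ⟨i, j, h1, h2⟩ := H
    exact ⟨i, j, h1, h2⟩
  exact
    Finset.sum_involution (fun σ _ => σ * Equiv.swap i j)
      (fun σ _ => by
        have : (∏ x, A (σ x) (p x)) = ∏ x, A ((σ * Equiv.swap i j) x) (p x) :=
          Fintype.prod_equiv (Equiv.swap i j) _ _
            (by simp [Equiv.apply_swap_eq_self hpij])
        simp [this, Equiv.Perm.sign_swap hij, -Equiv.Perm.sign_swap', prod_mul_distrib])
      (fun σ _ _ => (not_congr Equiv.mul_swap_eq_iff).mpr hij)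
      (fun _ _ => Finset.mem_univ _) fun σ _ => Equiv.mul_swap_involutive i j σ

/-- **Cauchy–Binet**. -/
theorem det_rect_mul (A : Matrix (Fin k) (Fin d) ℂ) (B : Matrix (Fin d) (Fin k) ℂ) :
    det (A * B) = ∑ w : SK d k,
      det (A.submatrix id (embOf w)) * det (B.submatrix (embOf w) id) :=
  calc
    det (A * B) = ∑ p : Fin k → Fin d, ∑ σ : Perm (Fin k),
        (ε σ) * ∏ i, A (σ i) (p i) * B (p i) i := by
      simp only [det_apply', mul_apply, prod_univ_sum, Finset.mul_sum, Fintype.piFinset_univ]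
      rw [Finset.sum_comm]
    _ = ∑ p : Fin k → Fin d with Function.Injective p, ∑ σ : Perm (Fin k),
        (ε σ) * ∏ i, A (σ i) (p i) * B (p i) i := by
      refine (Finset.sum_subset (Finset.filter_subset _ _) fun f _ hinj ↦
        det_rect_mul_aux ?_).symm
      simpa only [true_and, Finset.mem_filter, Finset.mem_univ] using hinj
    _ = ∑ wτ : SK d k × Perm (Fin k), ∑ σ : Perm (Fin k),
        (ε σ) * ∏ i, A (σ i) (embOf wτ.1 (wτ.2 i)) * B (embOf wτ.1 (wτ.2 i)) i := by
      refine (Finset.sum_bij (fun wτ _ => embOf wτ.1 ∘ wτ.2) ?_ ?_ ?_ ?_).symm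
      · intro wτ _
        simp only [Finset.mem_filter, Finset.mem_univ, true_and]
        exact (embOf_injective wτ.1).comp wτ.2.injective
      · rintro ⟨w, τ⟩ _ ⟨w', τ'⟩ _ h
        have hw : w = w' := by
          apply Subtype.ext
          rw [← image_embOf w, ← image_embOf w']
          have h2 : ∀ (u : SK d k) (ρ : Perm (Fin k)),
              Finset.image (embOf u ∘ ρ) Finset.univ = Finset.image (embOf u) Finset.univ := by
            intro u ρ
            rw [← Finset.image_image]
            congr 1
            exact Finset.image_univ_equiv ρ
          have h3 := congrArg (fun f => Finset.image f Finset.univ) h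
          simpa only [h2] using h3
        subst hw
        have hτ : τ = τ' := Equiv.ext fun i => embOf_injective w (congrFun h i)
        rw [hτ]
      · intro p hp
        rw [Finset.mem_filter] at hp
        have hpinj := hp.2
        have hcard : (Finset.image p Finset.univ).card = k := by
          rw [Finset.card_image_of_injective _ hpinj, Finset.card_univ, Fintype.card_fin]
        set w : SK d k := ⟨Finset.image p Finset.univ, hcard⟩ with hw
        have hmem : ∀ j, p j ∈ w.1 := fun j =>
          Finset.mem_image.2 ⟨j, Finset.mem_univ j, rfl⟩
        set g : Fin k → Fin k := fun j =>
          (w.1.orderIsoOfFin w.2).symm ⟨p j, hmem j⟩ with hg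
        have hge : ∀ j, embOf w (g j) = p j := by
          intro j
          show (w.1.orderEmbOfFin w.2) (g j) = p j
          have : ((w.1.orderIsoOfFin w.2) (g j) : Fin d) = p j := by
            rw [hg, OrderIso.apply_symm_apply]
          rw [← this]
          rfl
        have hginj : Function.Injective g := by
          intro a b hab
          apply hpinj
          rw [← hge a, ← hge b, hab]
        have hgbij : Function.Bijective g := hginj.bijective_of_finite
        refine ⟨⟨w, Equiv.ofBijective g hgbij⟩, Finset.mem_univ _, ?_⟩
        funext j
        exact hge j
      · intro wτ _
        rfl
    _ = ∑ w : SK d k, ∑ τ : Perm (Fin k), ∑ σ : Perm (Fin k),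
        (ε σ) * ∏ i, A (σ i) (embOf w (τ i)) * B (embOf w (τ i)) i := by
      rw [Fintype.sum_prod_type]
    _ = ∑ w : SK d k,
        det (A.submatrix id (embOf w)) * det (B.submatrix (embOf w) id) := by
      refine Finset.sum_congr rfl fun w _ => ?_
      exact det_sum_perm (A.submatrix id (embOf w)) (B.submatrix (embOf w) id)

lemma cpd_mul (M N : Matrix (Fin d) (Fin d) ℂ) :
    cpd k (M * N) = cpd k M * cpd k N := by
  ext s u
  rw [Matrix.mul_apply]
  show ((M * N).submatrix (embOf s) (embOf u)).det = _
  rw [Matrix.submatrix_mul M N (embOf s) id (embOf u) Function.bijective_id,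
    det_rect_mul]
  refine Finset.sum_congr rfl fun w _ => ?_
  rw [Matrix.submatrix_submatrix, Matrix.submatrix_submatrix]
  simp only [Function.comp_id, Function.id_comp]
  rfl

end Compound

section QuadraticForm

open Finset

variable {m : Type*} [Fintype m] [DecidableEq m]

lemma star_dot_mulVec (V : Matrix m m ℂ) (x z : m → ℂ) :
    star x ⬝ᵥ V *ᵥ z = star (Vᴴ *ᵥ x) ⬝ᵥ z := by
  rw [star_mulVec, conjTranspose_conjTranspose, dotProduct_mulVec]

lemma star_mulVec_dot (M : Matrix m m ℂ) (x w : m → ℂ) :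
    star (M *ᵥ x) ⬝ᵥ w = star x ⬝ᵥ Mᴴ *ᵥ w := by
  rw [star_mulVec, ← dotProduct_mulVec]

/-- `M` has quadratic form bounded by `c`. -/
def QB (M : Matrix m m ℂ) (c : ℝ) : Prop :=
  ∀ x : m → ℂ, (star x ⬝ᵥ M *ᵥ x).re ≤ c * (star x ⬝ᵥ x).re

lemma re_star_dot (x : m → ℂ) : (star x ⬝ᵥ x).re = ∑ i, Complex.normSq (x i) := by
  rw [dotProduct, Complex.re_sum]
  refine Finset.sum_congr rfl fun i _ => ?_
  simp [Complex.normSq_apply]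

lemma re_star_dot_pos {x : m → ℂ} (hx : x ≠ 0) : 0 < (star x ⬝ᵥ x).re := by
  rw [re_star_dot]
  obtain ⟨i, hi⟩ := Function.ne_iff.1 hx
  exact Finset.sum_pos' (fun j _ => Complex.normSq_nonneg _)
    ⟨i, Finset.mem_univ i, by simpa [Complex.normSq_pos] using hi⟩

lemma star_dot_conj_form (V : Matrix m m ℂ) (D : Matrix m m ℂ) (x : m → ℂ) :
    star x ⬝ᵥ (V * D * Vᴴ) *ᵥ x = star (Vᴴ *ᵥ x) ⬝ᵥ D *ᵥ (Vᴴ *ᵥ x) := by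
  rw [← mulVec_mulVec, ← mulVec_mulVec, star_dot_mulVec]

/-- Bound for matrices in unitary-diagonal form. -/
lemma qb_of_spectral {V : Matrix m m ℂ} {g : m → ℝ} {c : ℝ}
    (hV : Vᴴ * V = 1) (hg : ∀ i, g i ≤ c) :
    QB (V * diagonal (Complex.ofReal ∘ g) * Vᴴ) c := by
  intro x
  have hVV : V * Vᴴ = 1 := by rw [mul_eq_one_comm] at hV; exact hV
  set y := Vᴴ *ᵥ x with hy
  have hyx : (star y ⬝ᵥ y).re = (star x ⬝ᵥ x).re := by
    rw [hy, star_mulVec_dot, conjTranspose_conjTranspose, mulVec_mulVec, hVV, one_mulVec]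
  rw [star_dot_conj_form, ← hy]
  have hD : star y ⬝ᵥ (diagonal (Complex.ofReal ∘ g)) *ᵥ y
      = ∑ i, ((g i * Complex.normSq (y i) : ℝ) : ℂ) := by
    rw [dotProduct]
    refine Finset.sum_congr rfl fun i _ => ?_
    rw [mulVec_diagonal]
    push_cast
    rw [Complex.normSq_eq_conj_mul_self]
    simp only [Pi.star_apply, Function.comp_apply, RCLike.star_def]
    ring
  rw [hD, Complex.re_sum]
  simp only [Complex.ofReal_re]
  rw [← hyx, re_star_dot, Finset.mul_sum]
  exact Finset.sum_le_sum fun i _ =>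
    mul_le_mul_of_nonneg_right (hg i) (Complex.normSq_nonneg _)

lemma eig_le_of_qb {M : Matrix m m ℂ} {c : ℝ} (hqb : QB M c) {x : m → ℂ} {μ : ℝ}
    (hx : x ≠ 0) (hev : M *ᵥ x = (μ : ℂ) • x) : μ ≤ c := by
  have h1 : (star x ⬝ᵥ M *ᵥ x).re = μ * (star x ⬝ᵥ x).re := by
    rw [hev, dotProduct_smul, smul_eq_mul, Complex.re_ofReal_mul]
  have h2 := hqb x
  rw [h1] at h2
  exact le_of_mul_le_mul_right h2 (re_star_dot_pos hx)

lemma qb_sandwich {S T : Matrix m m ℂ} {a b : ℝ} (hS : S.IsHermitian)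
    (hSS : QB (S * S) a) (hT : QB T b) (hb : 0 ≤ b) :
    QB (S * T * S) (a * b) := by
  intro x
  have key : star x ⬝ᵥ (S * T * S) *ᵥ x = star (S *ᵥ x) ⬝ᵥ T *ᵥ (S *ᵥ x) := by
    rw [← mulVec_mulVec, ← mulVec_mulVec, star_dot_mulVec, hS.eq]
  have key2 : star (S *ᵥ x) ⬝ᵥ (S *ᵥ x) = star x ⬝ᵥ (S * S) *ᵥ x := by
    rw [star_mulVec_dot, hS.eq, mulVec_mulVec]
  calc (star x ⬝ᵥ (S * T * S) *ᵥ x).re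
      = (star (S *ᵥ x) ⬝ᵥ T *ᵥ (S *ᵥ x)).re := by rw [key]
    _ ≤ b * (star (S *ᵥ x) ⬝ᵥ (S *ᵥ x)).re := hT (S *ᵥ x)
    _ = b * (star x ⬝ᵥ (S * S) *ᵥ x).re := by rw [key2]
    _ ≤ b * (a * (star x ⬝ᵥ x).re) := mul_le_mul_of_nonneg_left (hSS x) hb
    _ = a * b * (star x ⬝ᵥ x).re := by ring

/-- Eigenvector of a unitarily diagonalised matrix. -/
lemma exists_eigenvector_diag {V : Matrix m m ℂ} (g : m → ℝ)
    (hV : Vᴴ * V = 1) (j : m) :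
    ∃ x : m → ℂ, x ≠ 0 ∧
      (V * diagonal (Complex.ofReal ∘ g) * Vᴴ) *ᵥ x = ((g j : ℂ)) • x := by
  set z : m → ℂ := Pi.single j 1 with hz
  refine ⟨V *ᵥ z, ?_, ?_⟩
  · intro h0
    have h1 : (Vᴴ * V) *ᵥ z = (0 : m → ℂ) := by
      rw [← mulVec_mulVec, h0, mulVec_zero]
    rw [hV, one_mulVec] at h1
    have := congrFun h1 j
    simp [hz] at this
  · have hsingle : (diagonal (Complex.ofReal ∘ g)) *ᵥ z = ((g j : ℂ)) • z := by
      funext i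
      rw [mulVec_diagonal]
      by_cases hij : i = j
      · subst hij; simp [hz]
      · simp [hz, Pi.single_eq_of_ne hij]
    rw [← mulVec_mulVec, ← mulVec_mulVec, mulVec_mulVec z Vᴴ V,
      hV, one_mulVec, hsingle, mulVec_smul]

end QuadraticForm

section Sorting

open Finset

variable {d k : ℕ}

lemma strictMono_fin_le {e : Fin k → Fin d} (he : StrictMono e) (j : Fin k) :
    (j : ℕ) ≤ (e j : ℕ) := by
  have key : ∀ n : ℕ, ∀ h : n < k, n ≤ (e ⟨n, h⟩ : ℕ) := by
    intro n
    induction n with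
    | zero => intro h; exact Nat.zero_le _
    | succ n ih =>
      intro h
      have h' : n < k := Nat.lt_of_succ_lt h
      have hlt : (e ⟨n, h'⟩ : ℕ) < (e ⟨n + 1, h⟩ : ℕ) := by
        have := he (show (⟨n, h'⟩ : Fin k) < ⟨n + 1, h⟩ by
          rw [Fin.lt_def]; exact Nat.lt_succ_self n)
        exact this
      have := ih h'
      omega
  have := key j.1 j.2
  simpa using this

/-- A product of `g` over any `k`-subset is at most the product of the
`k` largest values of `g`, provided `g` is positive. -/
lemma prod_subset_le_sorted (hk : k ≤ d) (g : Fin d → ℝ) (hg : ∀ i, 0 < g i)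
    (s : Finset (Fin d)) (hs : s.card = k) :
    ∏ i ∈ s, g i ≤ ∏ j : Fin k, g (Tuple.sort (fun j => -g j) (Fin.castLE hk j)) := by
  set σ := Tuple.sort (fun j => -g j) with hσ
  have hmono := Tuple.monotone_sort (fun j => -g j)
  have hanti : ∀ i j : Fin d, i ≤ j → g (σ j) ≤ g (σ i) := by
    intro i j hij
    have := hmono hij
    simpa using this
  set u : Finset (Fin d) := s.image σ.symm with hu
  have hucard : u.card = k := by
    rw [hu, Finset.card_image_of_injective _ σ.symm.injective, hs]
  set e : Fin k → Fin d := ⇑(u.orderEmbOfFin hucard) with he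
  have himg : Finset.image e Finset.univ = u := by
    apply Finset.coe_injective
    rw [Finset.coe_image, Finset.coe_univ, Set.image_univ]
    exact Finset.range_orderEmbOfFin u hucard
  have h1 : ∏ i ∈ s, g i = ∏ i ∈ u, g (σ i) := by
    rw [hu, Finset.prod_image (fun a _ b _ h => σ.symm.injective h)]
    exact Finset.prod_congr rfl fun i _ => by rw [Equiv.apply_symm_apply]
  have h2 : ∏ i ∈ u, g (σ i) = ∏ j : Fin k, g (σ (e j)) := by
    rw [← himg, Finset.prod_image
      (fun a _ b _ h => (u.orderEmbOfFin hucard).injective h)]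
  rw [h1, h2]
  apply Finset.prod_le_prod (fun j _ => le_of_lt (hg _))
  intro j _
  apply hanti
  rw [Fin.le_def]
  exact le_trans (by simp) (strictMono_fin_le (u.orderEmbOfFin hucard).strictMono j)

end Sorting

section CFCFacts

lemma cfc_explicit {A : Matrix n n ℂ} (hA : A.IsHermitian) (f : ℝ → ℝ) :
    hA.cfc f = (hA.eigenvectorUnitary : Matrix n n ℂ) *
      diagonal (Complex.ofReal ∘ (f ∘ hA.eigenvalues)) *
      (hA.eigenvectorUnitary : Matrix n n ℂ)ᴴ := rfl

lemma eigU_star_mul {A : Matrix n n ℂ} (hA : A.IsHermitian) :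
    (hA.eigenvectorUnitary : Matrix n n ℂ)ᴴ * (hA.eigenvectorUnitary : Matrix n n ℂ) = 1 := by
  rw [← Matrix.star_eq_conjTranspose]
  exact (Matrix.mem_unitaryGroup_iff').mp hA.eigenvectorUnitary.2

lemma eigU_mul_star {A : Matrix n n ℂ} (hA : A.IsHermitian) :
    (hA.eigenvectorUnitary : Matrix n n ℂ) * (hA.eigenvectorUnitary : Matrix n n ℂ)ᴴ = 1 := by
  rw [← Matrix.star_eq_conjTranspose]
  exact (Matrix.mem_unitaryGroup_iff).mp hA.eigenvectorUnitary.2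

lemma cfc_mul_cfc {A : Matrix n n ℂ} (hA : A.IsHermitian) (f g h : ℝ → ℝ)
    (hfg : ∀ i, f (hA.eigenvalues i) * g (hA.eigenvalues i) = h (hA.eigenvalues i)) :
    hA.cfc f * hA.cfc g = hA.cfc h := by
  rw [cfc_explicit, cfc_explicit, cfc_explicit]
  set W := (hA.eigenvectorUnitary : Matrix n n ℂ)
  calc W * diagonal (Complex.ofReal ∘ (f ∘ hA.eigenvalues)) * Wᴴ *
        (W * diagonal (Complex.ofReal ∘ (g ∘ hA.eigenvalues)) * Wᴴ)
      = W * (diagonal (Complex.ofReal ∘ (f ∘ hA.eigenvalues)) * (Wᴴ * W) *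
          diagonal (Complex.ofReal ∘ (g ∘ hA.eigenvalues))) * Wᴴ := by
        simp only [Matrix.mul_assoc]
    _ = W * diagonal (Complex.ofReal ∘ (h ∘ hA.eigenvalues)) * Wᴴ := by
        rw [eigU_star_mul, Matrix.mul_one, diagonal_mul_diagonal]
        have : (fun i => (Complex.ofReal ∘ (f ∘ hA.eigenvalues)) i *
            (Complex.ofReal ∘ (g ∘ hA.eigenvalues)) i)
            = Complex.ofReal ∘ (h ∘ hA.eigenvalues) := by
          funext i
          simp only [Function.comp_apply, ← Complex.ofReal_mul, hfg i]
        rw [this]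

lemma det_cfc {A : Matrix n n ℂ} (hA : A.IsHermitian) (f : ℝ → ℝ) :
    (hA.cfc f).det = ∏ i, ((f (hA.eigenvalues i) : ℂ)) := by
  rw [cfc_explicit, Matrix.det_mul_right_comm, eigU_mul_star, Matrix.one_mul, det_diagonal]
  rfl

end CFCFacts

/-- Log-majorisation `λ(A^{1-t} B^t) ≺_log λ(A)^{1-t} λ(B)^t`.
The (positive) eigenvalues of `A^{1-t}B^t` are those of the Hermitian matrix
`A^{(1-t)/2} B^t A^{(1-t)/2}`, to which it is similar. -/
theorem log_majorisation_power_mean {d : ℕ} {A B : Matrix (Fin d) (Fin d) ℂ}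
    (hA : A.PosDef) (hB : B.PosDef) {t : ℝ} (ht : t ∈ Set.Icc (0 : ℝ) 1) :
    (∀ k : ℕ, (hk : k ≤ d) →
      ∏ j : Fin k, eigDesc
          (mul_mul_isHermitian (mpow_isHermitian hA.1 ((1 - t)/2))
            (mpow_isHermitian hB.1 t)) (Fin.castLE hk j) ≤
        ∏ j : Fin k, (eigDesc hA.1 (Fin.castLE hk j)) ^ (1 - t) *
          (eigDesc hB.1 (Fin.castLE hk j)) ^ t) ∧
    (∏ j : Fin d, eigDesc
        (mul_mul_isHermitian (mpow_isHermitian hA.1 ((1 - t)/2))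
          (mpow_isHermitian hB.1 t)) j =
      ∏ j : Fin d, (eigDesc hA.1 j) ^ (1 - t) * (eigDesc hB.1 j) ^ t) := by
  obtain ⟨ht0, ht1⟩ := ht
  have h1t : (0:ℝ) ≤ 1 - t := by linarith
  have hlA_pos : ∀ i, 0 < hA.1.eigenvalues i := hA.eigenvalues_pos
  have hlB_pos : ∀ i, 0 < hB.1.eigenvalues i := hB.eigenvalues_pos
  have hC : (mpow hA.1 ((1 - t)/2) * mpow hB.1 t * mpow hA.1 ((1 - t)/2)).IsHermitian :=
    mul_mul_isHermitian (mpow_isHermitian hA.1 ((1 - t)/2)) (mpow_isHermitian hB.1 t)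
  have hPP : mpow hA.1 ((1 - t)/2) * mpow hA.1 ((1 - t)/2) = mpow hA.1 (1 - t) :=
    cfc_mul_cfc hA.1 (fun x => x ^ ((1 - t)/2)) (fun x => x ^ ((1 - t)/2))
      (fun x => x ^ (1 - t)) (fun i => by
        rw [← Real.rpow_add (hlA_pos i)]
        congr 1
        ring)
  constructor
  · -- the log-majorisation inequalities
    intro k hk
    -- abbreviations
    set cA := ∏ j : Fin k, (eigDesc hA.1 (Fin.castLE hk j)) ^ (1 - t) with hcA
    set cB := ∏ j : Fin k, (eigDesc hB.1 (Fin.castLE hk j)) ^ t with hcB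
    -- bound for the compound of `A^{1-t}`
    have hqbA : QB (cpd k (mpow hA.1 (1 - t))) cA := by
      have hform : cpd k (mpow hA.1 (1 - t)) =
          cpd k (hA.1.eigenvectorUnitary : Matrix (Fin d) (Fin d) ℂ) *
            Matrix.diagonal (Complex.ofReal ∘
              (fun s : SK d k => ∏ i ∈ s.1, hA.1.eigenvalues i ^ (1 - t))) *
            (cpd k (hA.1.eigenvectorUnitary : Matrix (Fin d) (Fin d) ℂ))ᴴ := by
        have hfun : (fun s : SK d k => ∏ i ∈ s.1,
            (Complex.ofReal ∘ ((fun x => x ^ (1 - t)) ∘ hA.1.eigenvalues)) i)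
            = Complex.ofReal ∘
              (fun s : SK d k => ∏ i ∈ s.1, hA.1.eigenvalues i ^ (1 - t)) := by
          funext s
          simp [Complex.ofReal_prod]
        rw [show mpow hA.1 (1 - t) = _ from cfc_explicit hA.1 (fun x => x ^ (1 - t)),
          cpd_mul, cpd_mul, cpd_diagonal, cpd_conjTranspose, hfun]
      rw [hform]
      apply qb_of_spectral
      · rw [← cpd_conjTranspose, ← cpd_mul, eigU_star_mul, cpd_one]
      · intro s
        calc ∏ i ∈ s.1, hA.1.eigenvalues i ^ (1 - t)
            = (∏ i ∈ s.1, hA.1.eigenvalues i) ^ (1 - t) :=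
              Real.finset_prod_rpow s.1 _ (fun i _ => (hlA_pos i).le) _
          _ ≤ (∏ j : Fin k, hA.1.eigenvalues
                (Tuple.sort (fun j => -hA.1.eigenvalues j) (Fin.castLE hk j))) ^ (1 - t) :=
              Real.rpow_le_rpow (Finset.prod_nonneg fun i _ => (hlA_pos i).le)
                (prod_subset_le_sorted hk _ hlA_pos s.1 s.2) h1t
          _ = cA := (Real.finset_prod_rpow _ _ (fun j _ => (hlA_pos _).le) _).symm
    -- bound for the compound of `B^t`
    have hqbB : QB (cpd k (mpow hB.1 t)) cB := by
      have hform : cpd k (mpow hB.1 t) =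
          cpd k (hB.1.eigenvectorUnitary : Matrix (Fin d) (Fin d) ℂ) *
            Matrix.diagonal (Complex.ofReal ∘
              (fun s : SK d k => ∏ i ∈ s.1, hB.1.eigenvalues i ^ t)) *
            (cpd k (hB.1.eigenvectorUnitary : Matrix (Fin d) (Fin d) ℂ))ᴴ := by
        have hfun : (fun s : SK d k => ∏ i ∈ s.1,
            (Complex.ofReal ∘ ((fun x => x ^ t) ∘ hB.1.eigenvalues)) i)
            = Complex.ofReal ∘
              (fun s : SK d k => ∏ i ∈ s.1, hB.1.eigenvalues i ^ t) := by
          funext s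
          simp [Complex.ofReal_prod]
        rw [show mpow hB.1 t = _ from cfc_explicit hB.1 (fun x => x ^ t),
          cpd_mul, cpd_mul, cpd_diagonal, cpd_conjTranspose, hfun]
      rw [hform]
      apply qb_of_spectral
      · rw [← cpd_conjTranspose, ← cpd_mul, eigU_star_mul, cpd_one]
      · intro s
        calc ∏ i ∈ s.1, hB.1.eigenvalues i ^ t
            = (∏ i ∈ s.1, hB.1.eigenvalues i) ^ t :=
              Real.finset_prod_rpow s.1 _ (fun i _ => (hlB_pos i).le) _
          _ ≤ (∏ j : Fin k, hB.1.eigenvalues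
                (Tuple.sort (fun j => -hB.1.eigenvalues j) (Fin.castLE hk j))) ^ t :=
              Real.rpow_le_rpow (Finset.prod_nonneg fun i _ => (hlB_pos i).le)
                (prod_subset_le_sorted hk _ hlB_pos s.1 s.2) ht0
          _ = cB := (Real.finset_prod_rpow _ _ (fun j _ => (hlB_pos _).le) _).symm
    have hcB0 : 0 ≤ cB := by
      rw [hcB]
      exact Finset.prod_nonneg fun j _ => Real.rpow_nonneg (hlB_pos _).le t
    -- Hermiticity of the compound of `P`
    have hSherm : (cpd k (mpow hA.1 ((1 - t)/2))).IsHermitian := by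
      show (cpd k (mpow hA.1 ((1 - t)/2)))ᴴ = _
      rw [← cpd_conjTranspose, (mpow_isHermitian hA.1 ((1 - t)/2)).eq]
    -- quadratic bound for the compound of the full product
    have hqbC : QB (cpd k (mpow hA.1 ((1 - t)/2) * mpow hB.1 t * mpow hA.1 ((1 - t)/2)))
        (cA * cB) := by
      rw [cpd_mul, cpd_mul]
      exact qb_sandwich hSherm (by rw [← cpd_mul, hPP]; exact hqbA) hqbB hcB0
    -- the top-k eigenvalue subset
    have hinj : Function.Injective
        (fun j : Fin k => (Tuple.sort (fun j => -hC.eigenvalues j)) (Fin.castLE hk j)) :=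
      fun a b hab => Fin.castLE_injective hk
        ((Tuple.sort (fun j => -hC.eigenvalues j)).injective hab)
    have hs0card : (Finset.image
        (fun j : Fin k => Tuple.sort (fun j => -hC.eigenvalues j) (Fin.castLE hk j))
        Finset.univ).card = k := by
      rw [Finset.card_image_of_injective _ hinj, Finset.card_univ, Fintype.card_fin]
    set s₀ : SK d k := ⟨_, hs0card⟩ with hs₀
    set gC : SK d k → ℝ := fun s => ∏ i ∈ s.1, hC.eigenvalues i with hgC
    have hgs₀ : gC s₀ = ∏ j : Fin k, eigDesc hC (Fin.castLE hk j) := by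
      rw [hgC, hs₀]
      exact Finset.prod_image (fun a _ b _ h => hinj h)
    -- spectral form of the compound of C
    have hCspec : mpow hA.1 ((1 - t)/2) * mpow hB.1 t * mpow hA.1 ((1 - t)/2) =
        (hC.eigenvectorUnitary : Matrix (Fin d) (Fin d) ℂ) *
          Matrix.diagonal (Complex.ofReal ∘ hC.eigenvalues) *
          (hC.eigenvectorUnitary : Matrix (Fin d) (Fin d) ℂ)ᴴ := by
      have := hC.spectral_theorem
      rwa [Unitary.conjStarAlgAut_apply, Matrix.star_eq_conjTranspose] at this
    have hcform : cpd k (mpow hA.1 ((1 - t)/2) * mpow hB.1 t * mpow hA.1 ((1 - t)/2)) =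
        cpd k (hC.eigenvectorUnitary : Matrix (Fin d) (Fin d) ℂ) *
          Matrix.diagonal (Complex.ofReal ∘ gC) *
          (cpd k (hC.eigenvectorUnitary : Matrix (Fin d) (Fin d) ℂ))ᴴ := by
      have hfun : (fun s : SK d k => ∏ i ∈ s.1, (Complex.ofReal ∘ hC.eigenvalues) i)
          = Complex.ofReal ∘ gC := by
        funext s
        simp [hgC, Complex.ofReal_prod]
      calc cpd k (mpow hA.1 ((1 - t)/2) * mpow hB.1 t * mpow hA.1 ((1 - t)/2))
          = cpd k ((hC.eigenvectorUnitary : Matrix (Fin d) (Fin d) ℂ) *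
              Matrix.diagonal (Complex.ofReal ∘ hC.eigenvalues) *
              (hC.eigenvectorUnitary : Matrix (Fin d) (Fin d) ℂ)ᴴ) :=
            congrArg (cpd k) hCspec
        _ = _ := by rw [cpd_mul, cpd_mul, cpd_diagonal, cpd_conjTranspose, hfun]
    have hVC : (cpd k (hC.eigenvectorUnitary : Matrix (Fin d) (Fin d) ℂ))ᴴ *
        cpd k (hC.eigenvectorUnitary : Matrix (Fin d) (Fin d) ℂ) = 1 := by
      rw [← cpd_conjTranspose, ← cpd_mul, eigU_star_mul, cpd_one]
    obtain ⟨x, hx0, hxev⟩ := exists_eigenvector_diag gC hVC s₀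
    rw [← hcform] at hxev
    have hle : gC s₀ ≤ cA * cB := eig_le_of_qb hqbC hx0 hxev
    have hfinal : ∏ j : Fin k, eigDesc hC (Fin.castLE hk j) ≤ cA * cB :=
      hgs₀.symm.trans_le hle
    show ∏ j : Fin k, eigDesc hC (Fin.castLE hk j) ≤ ∏ j : Fin k,
      eigDesc hA.1 (Fin.castLE hk j) ^ (1 - t) * eigDesc hB.1 (Fin.castLE hk j) ^ t
    rw [Finset.prod_mul_distrib]
    exact hfinal
  · -- the determinant equality
    have hAsplit : (∏ i, hA.1.eigenvalues i ^ ((1 - t)/2)) *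
        (∏ i, hA.1.eigenvalues i ^ ((1 - t)/2)) = ∏ i, hA.1.eigenvalues i ^ (1 - t) := by
      rw [← Finset.prod_mul_distrib]
      exact Finset.prod_congr rfl fun i _ => by
        rw [← Real.rpow_add (hlA_pos i)]
        congr 1
        ring
    have key : ((∏ i, hC.eigenvalues i : ℝ) : ℂ) =
        (((∏ i, hA.1.eigenvalues i ^ (1 - t)) * ∏ i, hB.1.eigenvalues i ^ t : ℝ) : ℂ) := by
      have hdetC : (mpow hA.1 ((1 - t)/2) * mpow hB.1 t * mpow hA.1 ((1 - t)/2)).det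
          = ∏ i, ((hC.eigenvalues i : ℝ) : ℂ) := hC.det_eq_prod_eigenvalues
      rw [Complex.ofReal_prod, ← hdetC]
      show (hA.1.cfc (fun x => x ^ ((1 - t)/2)) * hB.1.cfc (fun x => x ^ t) *
        hA.1.cfc (fun x => x ^ ((1 - t)/2))).det = _
      rw [Matrix.det_mul, Matrix.det_mul, det_cfc, det_cfc, ← hAsplit]
      push_cast
      ring
    have hreal := Complex.ofReal_injective key
    have e1 : ∏ j, eigDesc hC j = ∏ i, hC.eigenvalues i :=
      Equiv.prod_comp (Tuple.sort fun j => -hC.eigenvalues j) hC.eigenvalues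
    have e2 : ∏ j, eigDesc hA.1 j ^ (1 - t) = ∏ i, hA.1.eigenvalues i ^ (1 - t) :=
      Equiv.prod_comp (Tuple.sort fun j => -hA.1.eigenvalues j)
        (fun i => hA.1.eigenvalues i ^ (1 - t))
    have e3 : ∏ j, eigDesc hB.1 j ^ t = ∏ i, hB.1.eigenvalues i ^ t :=
      Equiv.prod_comp (Tuple.sort fun j => -hB.1.eigenvalues j)
        (fun i => hB.1.eigenvalues i ^ t)
    show ∏ j : Fin d, eigDesc hC j = ∏ j : Fin d, eigDesc hA.1 j ^ (1 - t) * eigDesc hB.1 j ^ t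
    rw [Finset.prod_mul_distrib, e1, e2, e3]
    exact hreal

end CGO
end
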